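/- arXiv:1508.03602 — 6 statements merged into one kernel-verified Lean document; each statement's English description precedes it below -/
import Mathlib

section
/- Let G(X) = c(X - β_1)···(X - β_n) be a polynomial of degree n with integer coefficients and nonzero discriminant D. Then the Mahler measure satisfies M(G) ≥ (|D|/n^n)^{1/(2n-2)}. -/
open Finset Polynomial

noncomputable def gsBasis {n : ℕ}
    (hcard : Module.finrank ℂ (EuclideanSpace ℂ (Fin n)) = Fintype.card (Fin n))
    (f : Fin n → EuclideanSpace ℂ (Fin n)) :
    OrthonormalBasis (Fin n) ℂ (EuclideanSpace ℂ (Fin n)) :=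
  InnerProductSpace.gramSchmidtOrthonormalBasis hcard f

lemma gsBasis_det {n : ℕ}
    (hcard : Module.finrank ℂ (EuclideanSpace ℂ (Fin n)) = Fintype.card (Fin n))
    (f : Fin n → EuclideanSpace ℂ (Fin n)) :
    (gsBasis hcard f).toBasis.det f = ∏ i, (inner ℂ (gsBasis hcard f i) (f i) : ℂ) :=
  InnerProductSpace.gramSchmidtOrthonormalBasis_det hcard f

/-- Hadamard's inequality for complex matrices: the norm of the determinant is at most
the product of the Euclidean norms of the rows. -/
lemma hadamard_rows {n : ℕ} (f : Fin n → EuclideanSpace ℂ (Fin n)) :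
    ‖(Matrix.of fun i j => f i j).det‖ ≤ ∏ i, ‖f i‖ := by
  classical
  have hcard : Module.finrank ℂ (EuclideanSpace ℂ (Fin n)) = Fintype.card (Fin n) := by
    simp [finrank_euclideanSpace]
  set b := gsBasis hcard f with hb
  set e := EuclideanSpace.basisFun (Fin n) ℂ with he
  have h1 : ‖b.toBasis.det f‖ ≤ ∏ i, ‖f i‖ := by
    rw [hb, gsBasis_det, norm_prod]
    refine Finset.prod_le_prod (fun i _ => norm_nonneg _) (fun i _ => ?_)
    calc ‖(inner ℂ (gsBasis hcard f i) (f i) : ℂ)‖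
        ≤ ‖gsBasis hcard f i‖ * ‖f i‖ := norm_inner_le_norm _ _
      _ = ‖f i‖ := by rw [(gsBasis hcard f).orthonormal.1 i, one_mul]
  have h2 : b.toBasis.det f = (b.toBasis.det ⇑e.toBasis) * (e.toBasis.det f) := by
    conv_lhs => rw [(b.toBasis.det).eq_smul_basis_det e.toBasis]
    simp
  have h3 : ‖b.toBasis.det ⇑e.toBasis‖ = 1 := by
    simpa using b.det_to_matrix_orthonormalBasis e
  have h4 : e.toBasis.det f = (Matrix.of fun i j => f i j).det := by
    rw [Module.Basis.det_apply, ← Matrix.det_transpose]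
    congr 1
  rw [← h4]
  calc ‖e.toBasis.det f‖ = ‖b.toBasis.det f‖ := by rw [h2, norm_mul, h3, one_mul]
  _ ≤ ∏ i, ‖f i‖ := h1

lemma prod_pairs_eq {M : Type*} [CommMonoid M] {n : ℕ} (g : Fin n → Fin n → M) :
    ∏ p ∈ Finset.univ.filter (fun p : Fin n × Fin n => p.1 < p.2), g p.1 p.2
      = ∏ i, ∏ j ∈ Finset.Ioi i, g i j := by
  rw [Finset.prod_sigma']
  refine Finset.prod_nbij' (fun p => ⟨p.1, p.2⟩) (fun x => (x.1, x.2)) ?_ ?_ ?_ ?_ ?_ <;>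
    simp [Finset.mem_filter, Finset.mem_Ioi, Finset.mem_sigma]


/-- (Mahler) If `G(X) = c (X - β₁) ⋯ (X - βₙ)` is a polynomial of degree `n`
with integer coefficients and nonzero discriminant
`D = c^(2n-2) ∏_{i<j} (β_i - β_j)^2`, then its Mahler measure
`M(G) = |c| ∏ max(1, |β_i|)` satisfies `M(G) ≥ (|D| / n^n)^(1/(2n-2))`. -/
theorem mahler_measure_ge_disc (n : ℕ) (hn : 2 ≤ n) (c : ℤ) (hc : c ≠ 0) (β : Fin n → ℂ)
    (G : Polynomial ℤ)
    (hG : G.map (Int.castRingHom ℂ) = C (c : ℂ) * ∏ i, (X - C (β i)))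
    (D : ℂ)
    (hD : D = (c : ℂ) ^ (2 * n - 2) *
      ∏ p ∈ Finset.univ.filter (fun p : Fin n × Fin n => p.1 < p.2), (β p.1 - β p.2) ^ 2)
    (hD0 : D ≠ 0) :
    (‖D‖ / (n : ℝ) ^ (n : ℕ)) ^ ((1 : ℝ) / (2 * n - 2)) ≤
      |(c : ℝ)| * ∏ i, max 1 (‖β i‖) := by
    classical
  have hnR : (2 : ℝ) ≤ (n : ℝ) := by exact_mod_cast hn
  set m : Fin n → ℝ := fun i => max 1 (‖β i‖) with hm
  have hm1 : ∀ i, 1 ≤ m i := fun i => le_max_left _ _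
  have hm0 : ∀ i, (0:ℝ) ≤ m i := fun i => le_trans zero_le_one (hm1 i)
  set K : ℝ := |(c:ℝ)| * ∏ i, m i with hK
  have hK0 : (0:ℝ) ≤ K := mul_nonneg (abs_nonneg _) (Finset.prod_nonneg fun i _ => hm0 i)
  set f : Fin n → EuclideanSpace ℂ (Fin n) :=
    fun i => (WithLp.equiv 2 _).symm (fun j => β i ^ (j:ℕ)) with hf
  have hrow : ∀ i, ‖f i‖^2 ≤ (n:ℝ) * m i ^ (2*(n-1)) := by
    intro i
    rw [EuclideanSpace.norm_eq, Real.sq_sqrt (by positivity)]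
    calc ∑ j, ‖f i j‖^2 ≤ ∑ _j : Fin n, m i ^ (2*(n-1)) := by
          refine Finset.sum_le_sum fun j _ => ?_
          have hfj : ‖f i j‖ = ‖β i‖ ^ (j:ℕ) := by
            simp [hf, norm_pow]
          rw [hfj, ← pow_mul]
          calc (‖β i‖) ^ ((j:ℕ)*2)
              ≤ m i ^ ((j:ℕ)*2) :=
                pow_le_pow_left₀ (norm_nonneg _) (le_max_right _ _) _
            _ ≤ m i ^ (2*(n-1)) := pow_le_pow_right₀ (hm1 i) (by omega)
      _ = (n:ℝ) * m i ^ (2*(n-1)) := by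
          rw [Finset.sum_const, Finset.card_univ, Fintype.card_fin, nsmul_eq_mul]
  have hV : ‖(Matrix.vandermonde β).det‖ ≤ ∏ i, ‖f i‖ := by
    have h := hadamard_rows f
    have hM : (Matrix.of fun i j => f i j) = Matrix.vandermonde β := by
      ext i j
      simp [hf, Matrix.vandermonde]
    rw [hM] at h
    simpa using h
  set P : ℂ := ∏ p ∈ Finset.univ.filter (fun p : Fin n × Fin n => p.1 < p.2),
      (β p.1 - β p.2) ^ 2 with hPdef
  have hP : ‖P‖ = ‖(Matrix.vandermonde β).det‖ ^ 2 := by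
    rw [hPdef, Matrix.det_vandermonde, norm_prod]
    have : ∀ p : Fin n × Fin n, ‖(β p.1 - β p.2)^2‖
        = (‖β p.2 - β p.1‖)^2 := by
      intro p; rw [norm_pow, norm_sub_rev]
    simp_rw [this]
    rw [prod_pairs_eq (fun i j => (‖β j - β i‖)^2)]
    rw [norm_prod]
    simp_rw [norm_prod, ← Finset.prod_pow]
  have hprodsq : (∏ i, ‖f i‖)^2 ≤ (n:ℝ)^(n:ℕ) * (∏ i, m i)^(2*n-2) := by
    have h2n : 2*(n-1) = 2*n-2 := by omega
    calc (∏ i, ‖f i‖)^2 = ∏ i, ‖f i‖^2 := by rw [Finset.prod_pow]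
      _ ≤ ∏ i, ((n:ℝ) * m i ^ (2*(n-1))) :=
          Finset.prod_le_prod (fun i _ => sq_nonneg _) (fun i _ => hrow i)
      _ = (n:ℝ)^(n:ℕ) * (∏ i, m i)^(2*n-2) := by
          rw [Finset.prod_mul_distrib, Finset.prod_const, Finset.card_univ, Fintype.card_fin,
            Finset.prod_pow, h2n]
  have key : ‖D‖ ≤ (n:ℝ)^(n:ℕ) * K^(2*n-2) := by
    rw [hD, norm_mul, norm_pow, Complex.norm_intCast]
    calc |(c:ℝ)|^(2*n-2) * ‖P‖
        ≤ |(c:ℝ)|^(2*n-2) * ((n:ℝ)^(n:ℕ) * (∏ i, m i)^(2*n-2)) := by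
          refine mul_le_mul_of_nonneg_left ?_ (by positivity)
          rw [hP]
          exact le_trans (pow_le_pow_left₀ (norm_nonneg _) hV 2) hprodsq
      _ = (n:ℝ)^(n:ℕ) * K^(2*n-2) := by rw [hK, mul_pow]; ring
  have hxp : (0:ℝ) < 2*(n:ℝ) - 2 := by linarith
  have hnn : (0:ℝ) < (n:ℝ)^(n:ℕ) := pow_pos (by linarith) _
  have step1 : ‖D‖ / (n:ℝ)^(n:ℕ) ≤ K^(2*n-2) := by
    rw [div_le_iff₀ hnn]
    exact key.trans_eq (mul_comm _ _)
  calc (‖D‖ / (n:ℝ)^(n:ℕ)) ^ ((1:ℝ)/(2*(n:ℝ)-2))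
      ≤ (K^(2*n-2 : ℕ)) ^ ((1:ℝ)/(2*(n:ℝ)-2)) := by
        refine Real.rpow_le_rpow ?_ step1 ?_
        · exact div_nonneg (norm_nonneg _) hnn.le
        · exact div_nonneg zero_le_one hxp.le
    _ = K := by
        rw [← Real.rpow_natCast K (2*n-2), ← Real.rpow_mul hK0]
        have hcast : ((2*n-2 : ℕ):ℝ) = 2*(n:ℝ)-2 := by
          rw [Nat.cast_sub (by omega)]; push_cast; ring
        rw [hcast, mul_one_div, div_self (ne_of_gt hxp), Real.rpow_one]
end

section
/- Let f(X) = a_n X^n + ... + a_1 X + a_0 be an irreducible polynomial of degree n with integer coefficients, discriminant D, Mahler measure M(f), and naive height H(f). If α is a root of f, then 2^{-(n-1)^2} · |D| / M(f)^{2n-2} ≤ |f'(α)| ≤ (n(n+1)/2) · H(f) · max(1, |α|)^{n-1}. -/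
open Finset Polynomial

private lemma sum_aux' (n : ℕ) : ∑ k ∈ Finset.range n, ((k : ℝ) + 1) = n * (n + 1) / 2 := by
  induction n with
  | zero => simp
  | succ n ih => rw [Finset.sum_range_succ, ih]; push_cast; ring

private lemma prod_pairs_sq' {n : ℕ} (g : Fin n → Fin n → ℝ) (hsymm : ∀ i k, g i k = g k i) :
    ∏ p ∈ Finset.univ.filter (fun p : Fin n × Fin n => p.1 < p.2), (g p.1 p.2) ^ 2
      = ∏ i, ∏ k ∈ Finset.univ.erase i, g i k := by
  have h1 : ∏ i, ∏ k ∈ Finset.univ.erase i, g i k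
      = ∏ p ∈ Finset.univ.filter (fun p : Fin n × Fin n => p.1 ≠ p.2), g p.1 p.2 := by
    rw [Finset.prod_filter, ← Finset.univ_product_univ, Finset.prod_product]
    refine Finset.prod_congr rfl fun i _ => ?_
    rw [← Finset.filter_ne' Finset.univ i, Finset.prod_filter]
    exact Finset.prod_congr rfl fun k _ => by by_cases h : i = k <;> simp [h, Ne, eq_comm]
  have h2 : (Finset.univ.filter (fun p : Fin n × Fin n => p.1 ≠ p.2))
      = (Finset.univ.filter (fun p : Fin n × Fin n => p.1 < p.2))
        ∪ (Finset.univ.filter (fun p : Fin n × Fin n => p.2 < p.1)) := by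
    ext p
    simp only [Finset.mem_filter, Finset.mem_union, Finset.mem_univ, true_and]
    exact ⟨fun h => lt_or_gt_of_ne h, fun h => h.elim ne_of_lt (fun h' => (ne_of_lt h').symm)⟩
  have hdisj : Disjoint (Finset.univ.filter (fun p : Fin n × Fin n => p.1 < p.2))
      (Finset.univ.filter (fun p : Fin n × Fin n => p.2 < p.1)) := by
    rw [Finset.disjoint_filter]
    intro p _ h1 h2
    exact absurd h1 (not_lt_of_gt h2)
  have h3 : ∏ p ∈ Finset.univ.filter (fun p : Fin n × Fin n => p.2 < p.1), g p.1 p.2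
      = ∏ p ∈ Finset.univ.filter (fun p : Fin n × Fin n => p.1 < p.2), g p.1 p.2 := by
    refine Finset.prod_nbij' Prod.swap Prod.swap ?_ ?_ ?_ ?_ ?_
    · intro p hp; simp at hp ⊢; exact hp
    · intro p hp; simp at hp ⊢; exact hp
    · intro p _; simp
    · intro p _; simp
    · intro p _; exact hsymm p.1 p.2
  rw [h1, h2, Finset.prod_union hdisj, h3, ← sq, Finset.prod_pow]

private lemma lower_chain' {n : ℕ} (j : Fin n) (d : Fin n → Fin n → ℝ) (m : Fin n → ℝ)
    (hd0 : ∀ i k, 0 ≤ d i k) (hdle : ∀ i k, d i k ≤ 2 * m i * m k) (hm : ∀ i, 1 ≤ m i)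
    (A : ℝ) (hA : 1 ≤ A) :
    A ^ (2 * n - 2) * ∏ i, ∏ k ∈ Finset.univ.erase i, d i k
      ≤ 2 ^ ((n - 1) * (n - 1)) * (A * ∏ i, m i) ^ (2 * n - 2)
        * (A * ∏ k ∈ Finset.univ.erase j, d j k) := by
  set Q : ℝ := ∏ i, m i with hQdef
  have hQ1 : (1 : ℝ) ≤ Q := by
    have := Finset.prod_le_prod (s := Finset.univ) (f := fun _ : Fin n => (1:ℝ)) (g := m)
      (fun i _ => zero_le_one) (fun i _ => hm i)
    simpa using this
  have hQ0 : (0 : ℝ) ≤ Q := le_trans zero_le_one hQ1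
  have hA0 : (0 : ℝ) ≤ A := le_trans zero_le_one hA
  have hcard : ∀ i : Fin n, (Finset.univ.erase i).card = n - 1 := fun i => by
    rw [Finset.card_erase_of_mem (Finset.mem_univ i), Finset.card_univ, Fintype.card_fin]
  have hsub : ∀ i : Fin n, ∏ k ∈ Finset.univ.erase i, m k ≤ Q := fun i => by
    rw [hQdef, ← Finset.mul_prod_erase Finset.univ m (Finset.mem_univ i)]
    exact le_mul_of_one_le_left
      (Finset.prod_nonneg fun k _ => le_trans zero_le_one (hm k)) (hm i)
  set R : ℝ := ∏ i ∈ Finset.univ.erase j, ∏ k ∈ Finset.univ.erase i, d i k with hRdef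
  have hsplit : ∏ i, ∏ k ∈ Finset.univ.erase i, d i k
      = (∏ k ∈ Finset.univ.erase j, d j k) * R :=
    (Finset.mul_prod_erase Finset.univ _ (Finset.mem_univ j)).symm
  have hR : R ≤ 2 ^ ((n - 1) * (n - 1)) * Q ^ (2 * n - 2) := by
    have step1 : R ≤ ∏ i ∈ Finset.univ.erase j, (2 ^ (n - 1) * m i ^ (n - 1)
        * ∏ k ∈ Finset.univ.erase i, m k) := by
      refine Finset.prod_le_prod (fun i _ => Finset.prod_nonneg fun k _ => hd0 i k)
        (fun i _ => ?_)
      have : ∏ k ∈ Finset.univ.erase i, d i k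
          ≤ ∏ k ∈ Finset.univ.erase i, (2 * m i * m k) :=
        Finset.prod_le_prod (fun k _ => hd0 i k) (fun k _ => hdle i k)
      refine this.trans_eq ?_
      rw [Finset.prod_mul_distrib, Finset.prod_const, hcard i, mul_pow]
    have step2 : ∏ i ∈ Finset.univ.erase j, (2 ^ (n - 1) * m i ^ (n - 1)
        * ∏ k ∈ Finset.univ.erase i, m k)
        ≤ ∏ i ∈ Finset.univ.erase j, (2 ^ (n - 1) * m i ^ (n - 1) * Q) := by
      have hm0 : ∀ i : Fin n, (0:ℝ) ≤ m i := fun i => le_trans zero_le_one (hm i)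
      refine Finset.prod_le_prod (fun i _ => ?_) (fun i _ => ?_)
      · exact mul_nonneg (mul_nonneg (by positivity) (pow_nonneg (hm0 i) _))
          (Finset.prod_nonneg fun k _ => hm0 k)
      · exact mul_le_mul_of_nonneg_left (hsub i)
          (mul_nonneg (by positivity) (pow_nonneg (hm0 i) _))
    have step3 : ∏ i ∈ Finset.univ.erase j, (2 ^ (n - 1) * m i ^ (n - 1) * Q)
        = 2 ^ ((n - 1) * (n - 1)) * (∏ i ∈ Finset.univ.erase j, m i) ^ (n - 1)
          * Q ^ (n - 1) := by
      rw [Finset.prod_mul_distrib, Finset.prod_mul_distrib, Finset.prod_const,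
        Finset.prod_const, hcard j, Finset.prod_pow, ← pow_mul]
    have step4 : 2 ^ ((n - 1) * (n - 1)) * (∏ i ∈ Finset.univ.erase j, m i) ^ (n - 1)
          * Q ^ (n - 1) ≤ 2 ^ ((n - 1) * (n - 1)) * Q ^ (n - 1) * Q ^ (n - 1) := by
      have h1 : (∏ i ∈ Finset.univ.erase j, m i) ^ (n - 1) ≤ Q ^ (n - 1) :=
        pow_le_pow_left₀ (Finset.prod_nonneg fun i _ => le_trans zero_le_one (hm i))
          (hsub j) _
      have h2 : (0:ℝ) ≤ Q ^ (n-1) := by positivity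
      exact mul_le_mul_of_nonneg_right
        (mul_le_mul_of_nonneg_left h1 (by positivity)) h2
    have step5 : (2:ℝ) ^ ((n - 1) * (n - 1)) * Q ^ (n - 1) * Q ^ (n - 1)
        = 2 ^ ((n - 1) * (n - 1)) * Q ^ (2 * n - 2) := by
      rw [mul_assoc, ← pow_add]
      congr 2
      omega
    calc R ≤ _ := step1
      _ ≤ _ := step2
      _ = _ := step3
      _ ≤ _ := step4
      _ = _ := step5
  rw [hsplit]
  have hDle : (0:ℝ) ≤ ∏ k ∈ Finset.univ.erase j, d j k :=
    Finset.prod_nonneg fun k _ => hd0 j k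
  calc A ^ (2*n-2) * ((∏ k ∈ Finset.univ.erase j, d j k) * R)
      ≤ A ^ (2*n-2) * ((∏ k ∈ Finset.univ.erase j, d j k)
          * (2 ^ ((n-1)*(n-1)) * Q ^ (2*n-2))) := by
        refine mul_le_mul_of_nonneg_left ?_ (by positivity)
        exact mul_le_mul_of_nonneg_left hR hDle
    _ = 2 ^ ((n-1)*(n-1)) * (A ^ (2*n-2) * Q ^ (2*n-2))
          * (1 * ∏ k ∈ Finset.univ.erase j, d j k) := by ring
    _ ≤ 2 ^ ((n-1)*(n-1)) * (A ^ (2*n-2) * Q ^ (2*n-2))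
          * (A * ∏ k ∈ Finset.univ.erase j, d j k) := by
        refine mul_le_mul_of_nonneg_left ?_ (by positivity)
        exact mul_le_mul_of_nonneg_right hA hDle
    _ = 2 ^ ((n-1)*(n-1)) * (A * Q) ^ (2*n-2)
          * (A * ∏ k ∈ Finset.univ.erase j, d j k) := by rw [mul_pow]

/-- Let `f = aₙ Xⁿ + ⋯ + a₀ ∈ ℤ[X]` be irreducible of degree `n`, with
discriminant `D = aₙ^(2n-2) ∏_{i<j} (α_i - α_j)^2`, Mahler measure `M = |aₙ| ∏ max(1,|α_i|)`
and naive height `H = max |a_i|`.  If `α` is a root of `f` then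
`2^(-(n-1)²) |D| / M^(2n-2) ≤ |f'(α)| ≤ (n(n+1)/2) H max(1,|α|)^(n-1)`. -/
theorem deriv_at_root_bounds (n : ℕ) (hn : 1 ≤ n) (f : Polynomial ℤ)
    (hdeg : f.natDegree = n) (hirr : Irreducible f)
    (r : Fin n → ℂ)
    (hroots : f.map (Int.castRingHom ℂ) = C ((f.leadingCoeff : ℂ)) * ∏ i, (X - C (r i)))
    (α : ℂ) (hα : Polynomial.aeval α f = 0)
    (D : ℂ)
    (hD : D = (f.leadingCoeff : ℂ) ^ (2 * n - 2) *
      ∏ p ∈ Finset.univ.filter (fun p : Fin n × Fin n => p.1 < p.2), (r p.1 - r p.2) ^ 2)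
    (M H : ℝ)
    (hM : M = |(f.leadingCoeff : ℝ)| * ∏ i, max 1 (‖r i‖))
    (hH : H = ((Finset.range (n + 1)).sup fun i => (f.coeff i).natAbs : ℕ)) :
    (2 : ℝ) ^ (-((n : ℝ) - 1) ^ 2) * ‖D‖ / M ^ (2 * n - 2) ≤
        ‖Polynomial.aeval α (Polynomial.derivative f)‖ ∧
      ‖Polynomial.aeval α (Polynomial.derivative f)‖ ≤
        (n * (n + 1) / 2 : ℝ) * H * max 1 (‖α‖) ^ (n - 1) := by
  have hmap : ∀ (p : Polynomial ℤ) (x : ℂ),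
      Polynomial.aeval x p = (p.map (Int.castRingHom ℂ)).eval x := by
    intro p x
    rw [Polynomial.aeval_def, Polynomial.eval_map, algebraMap_int_eq]
  have hf0 : f ≠ 0 := hirr.ne_zero
  have hlc : f.leadingCoeff ≠ 0 := Polynomial.leadingCoeff_ne_zero.mpr hf0
  have hlcC : (f.leadingCoeff : ℂ) ≠ 0 := Int.cast_ne_zero.mpr hlc
  -- find the index of the root
  have hα' : (f.leadingCoeff : ℂ) * ∏ i, (α - r i) = 0 := by
    have := hα
    rw [hmap f α, hroots] at this
    simpa [Polynomial.eval_prod] using this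
  have hprod0 : ∏ i, (α - r i) = 0 := by
    rcases mul_eq_zero.mp hα' with h | h
    · exact absurd h hlcC
    · exact h
  obtain ⟨j, -, hj⟩ := Finset.prod_eq_zero_iff.mp hprod0
  have hαj : α = r j := by linear_combination hj
  -- the derivative at the root
  have hderiv : Polynomial.aeval α (Polynomial.derivative f)
      = (f.leadingCoeff : ℂ) * ∏ k ∈ Finset.univ.erase j, (r j - r k) := by
    have h1 : Polynomial.aeval α (Polynomial.derivative f)
        = ((f.map (Int.castRingHom ℂ)).derivative).eval α := by
      rw [hmap (derivative f) α, Polynomial.derivative_map]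
    rw [h1, hroots]
    rw [Polynomial.derivative_C_mul, Polynomial.eval_mul, Polynomial.eval_C]
    congr 1
    have hS : (∏ i, (X - C (r i)) : Polynomial ℂ)
        = (Multiset.map (fun a => X - C a) (Multiset.map r Finset.univ.val)).prod := by
      rw [Multiset.map_map]
      rfl
    have hmem : α ∈ Multiset.map r Finset.univ.val := by
      rw [hαj]; exact Multiset.mem_map_of_mem r (Finset.mem_univ j)
    rw [hS, Polynomial.eval_multiset_prod_X_sub_C_derivative hmem]
    have herase : (Multiset.map r Finset.univ.val).erase α
        = Multiset.map r (Finset.univ.val.erase j) := by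
      conv_lhs => rw [hαj, show (Multiset.map r Finset.univ.val)
        = r j ::ₘ Multiset.map r (Finset.univ.val.erase j) by
          rw [← Multiset.map_cons, Multiset.cons_erase (Finset.mem_univ j)]]
      exact Multiset.erase_cons_head _ _
    rw [herase, hαj, Multiset.map_map]
    rfl
  -- absolute values and abbreviations
  set A : ℝ := |(f.leadingCoeff : ℝ)| with hAdef
  have hA1 : (1:ℝ) ≤ A := by
    rw [hAdef, ← Int.cast_abs]
    exact_mod_cast Int.one_le_abs hlc
  set m : Fin n → ℝ := fun i => max 1 (‖r i‖) with hmdef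
  have hm1 : ∀ i, (1:ℝ) ≤ m i := fun i => le_max_left _ _
  set d : Fin n → Fin n → ℝ := fun i k => ‖r i - r k‖ with hddef
  have hd0 : ∀ i k, 0 ≤ d i k := fun i k => norm_nonneg _
  have hdsymm : ∀ i k, d i k = d k i := fun i k => norm_sub_rev _ _
  have hdle : ∀ i k, d i k ≤ 2 * m i * m k := by
    intro i k
    have h1 : d i k ≤ ‖r i‖ + ‖r k‖ := by
      rw [hddef]
      exact norm_sub_le _ _
    have h2 : ‖r i‖ ≤ m i := le_max_right _ _
    have h3 : ‖r k‖ ≤ m k := le_max_right _ _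
    nlinarith [hm1 i, hm1 k]
  have habsderiv : ‖Polynomial.aeval α (Polynomial.derivative f)‖
      = A * ∏ k ∈ Finset.univ.erase j, d j k := by
    rw [hderiv, norm_mul, Complex.norm_intCast, norm_prod]
  have habsD : ‖D‖
      = A ^ (2*n-2) * ∏ i, ∏ k ∈ Finset.univ.erase i, d i k := by
    rw [hD, norm_mul, norm_pow, Complex.norm_intCast, norm_prod, ← prod_pairs_sq' d hdsymm]
    congr 1
    exact Finset.prod_congr rfl fun p _ => by rw [norm_pow]
  constructor
  · -- lower bound
    have hMval : M = A * ∏ i, m i := hM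
    have hM1 : (1:ℝ) ≤ M := by
      rw [hMval]
      have hQ1 : (1 : ℝ) ≤ ∏ i, m i := by
        have := Finset.prod_le_prod (s := Finset.univ) (f := fun _ : Fin n => (1:ℝ))
          (g := m) (fun i _ => zero_le_one) (fun i _ => hm1 i)
        simpa using this
      nlinarith
    have hMpos : (0:ℝ) < M := lt_of_lt_of_le zero_lt_one hM1
    have hkey : ‖D‖ ≤ 2 ^ ((n-1)*(n-1)) * M ^ (2*n-2)
        * ‖Polynomial.aeval α (Polynomial.derivative f)‖ := by
      rw [habsD, habsderiv, hMval]
      exact lower_chain' j d m hd0 hdle hm1 A hA1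
    have hexp : (2 : ℝ) ^ (-((n : ℝ) - 1) ^ 2) = ((2:ℝ) ^ ((n-1)*(n-1)))⁻¹ := by
      have h1 : ((n : ℝ) - 1) = ((n - 1 : ℕ) : ℝ) := by
        rw [Nat.cast_sub hn]; norm_num
      have h2 : (-((n : ℝ) - 1) ^ 2) = -(((n-1)*(n-1) : ℕ) : ℝ) := by
        rw [h1]; push_cast; ring
      rw [h2, Real.rpow_neg (by norm_num), Real.rpow_natCast]
    rw [hexp, div_le_iff₀ (by positivity), inv_mul_le_iff₀ (by positivity)]
    calc ‖D‖ ≤ _ := hkey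
      _ = 2 ^ ((n-1)*(n-1)) * (‖Polynomial.aeval α (Polynomial.derivative f)‖
            * M ^ (2*n-2)) := by ring
  · -- upper bound
    set B : ℝ := max 1 (‖α‖) with hBdef
    have hB1 : (1:ℝ) ≤ B := le_max_left _ _
    have hαB : ‖α‖ ≤ B := le_max_right _ _
    have hH0 : (0:ℝ) ≤ H := hH ▸ Nat.cast_nonneg _
    have hcoeff : ∀ i : ℕ, i ≤ n → |((f.coeff i : ℤ) : ℝ)| ≤ H := by
      intro i hi
      have h1 : (f.coeff i).natAbs ≤ (Finset.range (n + 1)).sup fun i => (f.coeff i).natAbs :=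
        Finset.le_sup (f := fun i => (f.coeff i).natAbs) (Finset.mem_range.mpr (by omega))
      have h2 : |((f.coeff i : ℤ) : ℝ)| = ((f.coeff i).natAbs : ℝ) := by
        rw [Nat.cast_natAbs (n := f.coeff i), ← Int.cast_abs]
      rw [h2, hH]
      exact_mod_cast h1
    have hdeglt : ((Polynomial.derivative f).map (Int.castRingHom ℂ)).natDegree < n := by
      refine lt_of_le_of_lt Polynomial.natDegree_map_le ?_
      refine lt_of_le_of_lt (Polynomial.natDegree_derivative_le f) ?_
      omega
    rw [hmap, Polynomial.eval_eq_sum_range' hdeglt]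
    refine le_trans (norm_sum_le _ _) ?_
    have hterm : ∀ k ∈ Finset.range n,
        ‖((Polynomial.derivative f).map (Int.castRingHom ℂ)).coeff k * α ^ k‖
          ≤ ((k:ℝ) + 1) * (H * B ^ (n - 1)) := by
      intro k hk
      rw [Finset.mem_range] at hk
      rw [norm_mul, norm_pow]
      have hc : ((Polynomial.derivative f).map (Int.castRingHom ℂ)).coeff k
          = ((Polynomial.derivative f).coeff k : ℂ) := Polynomial.coeff_map _ _
      rw [hc, Polynomial.coeff_derivative, Complex.norm_intCast]
      have h1 : |((f.coeff (k + 1) * (k + 1) : ℤ) : ℝ)|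
          = |((f.coeff (k+1) : ℤ) : ℝ)| * ((k:ℝ) + 1) := by
        push_cast
        rw [abs_mul]
        congr 1
        rw [abs_of_nonneg]
        positivity
      rw [h1]
      have h2 : ‖α‖ ^ k ≤ B ^ (n - 1) := by
        refine le_trans (pow_le_pow_left₀ (norm_nonneg α) hαB k) ?_
        exact pow_le_pow_right₀ hB1 (by omega)
      have h3 : |((f.coeff (k+1) : ℤ) : ℝ)| ≤ H := hcoeff (k+1) (by omega)
      calc |((f.coeff (k+1) : ℤ) : ℝ)| * ((k:ℝ) + 1) * ‖α‖ ^ k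
          ≤ H * ((k:ℝ) + 1) * B ^ (n-1) := by
            refine mul_le_mul (mul_le_mul_of_nonneg_right h3 (by positivity)) h2
              (by positivity) (by positivity)
        _ = ((k:ℝ) + 1) * (H * B ^ (n-1)) := by ring
    refine le_trans (Finset.sum_le_sum hterm) ?_
    rw [← Finset.sum_mul, sum_aux']
    rw [mul_assoc]
end

section
/- Let F(x,y) = a_0 ∏_{j=1}^n (x - α_j y) be a binary form with integer coefficients, degree n ≥ 3, and nonzero discriminant D. For every pair of integers (x, y) with y ≠ 0, there exists a root α of F(z,1) such that |α - x/y| ≤ 2^{n-1} · n^{n-1/2} · M(F)^{n-2} · |F(x,y)| / (|D|^{1/2} · |y|^n). -/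
open Finset Polynomial

lemma pair_prod_eq {m : ℕ} (g : Fin m → Fin m → ℝ) :
    ∏ p ∈ univ.filter (fun p : Fin m × Fin m => p.1 < p.2), g p.1 p.2 =
      ∏ i, ∏ j ∈ Finset.Ioi i, g i j := by
  have h2 : ∏ i, ∏ j ∈ Finset.Ioi i, g i j
      = ∏ p ∈ (univ : Finset (Fin m)).sigma (fun i => Finset.Ioi i), g p.1 p.2 :=
    Finset.prod_sigma' _ _ _
  rw [h2]
  apply Finset.prod_bij (fun (p : Fin m × Fin m) _ => (⟨p.1, p.2⟩ : Σ _ : Fin m, Fin m))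
  · intro a ha
    simp only [Finset.mem_filter, Finset.mem_univ, true_and] at ha
    simp [ha]
  · intro a ha b hb h
    obtain ⟨h1, h2⟩ := Sigma.mk.inj_iff.mp h
    exact Prod.ext h1 (eq_of_heq h2)
  · intro b hb
    simp only [Finset.mem_sigma, Finset.mem_univ, Finset.mem_Ioi, true_and] at hb
    exact ⟨(b.1, b.2), by simp [hb], rfl⟩
  · intros; rfl

lemma vand_bound {m : ℕ} (v : Fin m → ℂ) :
    ∏ p ∈ univ.filter (fun p : Fin m × Fin m => p.1 < p.2), ‖v p.1 - v p.2‖ ≤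
      (m.factorial : ℝ) * (∏ k, max 1 (‖v k‖)) ^ (m - 1) := by
  have heq : ∏ p ∈ univ.filter (fun p : Fin m × Fin m => p.1 < p.2),
      ‖v p.1 - v p.2‖ = ‖(Matrix.vandermonde v).det‖ := by
    rw [Matrix.det_vandermonde, norm_prod, pair_prod_eq (fun i j => ‖v i - v j‖)]
    exact Finset.prod_congr rfl fun i _ => by
      rw [norm_prod]; exact Finset.prod_congr rfl fun j _ => (norm_sub_rev _ _)
  rw [heq, Matrix.det_apply']
  have hb : ∀ σ : Equiv.Perm (Fin m),
      ‖((Equiv.Perm.sign σ : ℤ) : ℂ) * ∏ i, Matrix.vandermonde v (σ i) i‖ ≤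
        (∏ k, max 1 (‖v k‖)) ^ (m - 1) := by
    intro σ
    have hsign : ‖((Equiv.Perm.sign σ : ℤ) : ℂ)‖ = 1 := by
      rcases Int.units_eq_one_or (Equiv.Perm.sign σ) with h | h <;> rw [h] <;> simp
    rw [norm_mul, hsign, one_mul, norm_prod]
    calc ∏ i, ‖Matrix.vandermonde v (σ i) i‖
        ≤ ∏ i : Fin m, max 1 (‖v (σ i)‖) ^ (m - 1) := by
          apply Finset.prod_le_prod (fun _ _ => (norm_nonneg _))
          intro i _
          rw [Matrix.vandermonde_apply, norm_pow]
          calc ‖v (σ i)‖ ^ (i : ℕ)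
              ≤ max 1 (‖v (σ i)‖) ^ (i : ℕ) :=
                pow_le_pow_left₀ (norm_nonneg _) (le_max_right _ _) _
            _ ≤ max 1 (‖v (σ i)‖) ^ (m - 1) :=
                pow_le_pow_right₀ (le_max_left _ _) (by have := i.isLt; omega)
      _ = (∏ k, max 1 (‖v k‖)) ^ (m - 1) := by
          rw [← Finset.prod_pow]
          exact Equiv.prod_comp σ (fun k => max 1 (‖v k‖) ^ (m - 1))
  refine le_trans (norm_sum_le _ _) ?_
  refine le_of_le_of_eq (Finset.sum_le_sum fun σ _ => hb σ) ?_
  rw [Finset.sum_const, nsmul_eq_mul, Finset.card_univ, Fintype.card_perm, Fintype.card_fin]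

lemma split_pairs {m : ℕ} (g : Fin (m+1) → Fin (m+1) → ℝ) (hsymm : ∀ i j, g i j = g j i)
    (i₀ : Fin (m+1)) :
    ∏ p ∈ univ.filter (fun p : Fin (m+1) × Fin (m+1) => p.1 < p.2), g p.1 p.2 =
      (∏ k : Fin m, g i₀ (i₀.succAbove k)) *
      ∏ q ∈ univ.filter (fun q : Fin m × Fin m => q.1 < q.2),
        g (i₀.succAbove q.1) (i₀.succAbove q.2) := by
  rw [← Finset.prod_filter_mul_prod_filter_not
    (univ.filter (fun p : Fin (m+1) × Fin (m+1) => p.1 < p.2))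
    (fun p => p.1 = i₀ ∨ p.2 = i₀)]
  congr 1
  · symm
    apply Finset.prod_bij (fun (k : Fin m) _ =>
      if i₀ < i₀.succAbove k then (i₀, i₀.succAbove k) else (i₀.succAbove k, i₀))
    · intro k _
      simp only [Finset.mem_filter, Finset.mem_univ, true_and]
      split_ifs with h
      · exact ⟨h, Or.inl rfl⟩
      · exact ⟨lt_of_le_of_ne (not_lt.mp h) (Fin.succAbove_ne i₀ k), Or.inr rfl⟩
    · intro a _ b _ h
      split_ifs at h with h1 h2 h2 <;>
        simp only [Prod.mk.injEq] at h
      · exact Fin.succAbove_right_injective h.2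
      · exact absurd h.1.symm (Fin.succAbove_ne i₀ b)
      · exact absurd h.1 (Fin.succAbove_ne i₀ a)
      · exact Fin.succAbove_right_injective h.1
    · intro p hp
      simp only [Finset.mem_filter, Finset.mem_univ, true_and] at hp
      obtain ⟨hlt, heq | heq⟩ := hp
      · have h2 : p.2 ≠ i₀ := fun h => by rw [heq, h] at hlt; exact lt_irrefl _ hlt
        obtain ⟨k, hk⟩ := Fin.exists_succAbove_eq h2
        refine ⟨k, Finset.mem_univ _, ?_⟩
        rw [hk, if_pos (heq ▸ hlt)]
        exact Prod.ext heq.symm rfl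
      · have h1 : p.1 ≠ i₀ := fun h => by rw [heq, h] at hlt; exact lt_irrefl _ hlt
        obtain ⟨k, hk⟩ := Fin.exists_succAbove_eq h1
        refine ⟨k, Finset.mem_univ _, ?_⟩
        rw [hk, if_neg (not_lt.mpr (le_of_lt (heq ▸ hlt)))]
        exact Prod.ext rfl heq.symm
    · intro k _
      split_ifs with h
      · rfl
      · exact hsymm _ _
  · symm
    apply Finset.prod_bij (fun (q : Fin m × Fin m) _ => (i₀.succAbove q.1, i₀.succAbove q.2))
    · intro q hq
      simp only [Finset.mem_filter, Finset.mem_univ, true_and] at hq ⊢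
      exact ⟨Fin.succAbove_lt_succAbove_iff.mpr hq,
        by push_neg; exact ⟨Fin.succAbove_ne i₀ q.1, Fin.succAbove_ne i₀ q.2⟩⟩
    · intro a _ b _ h
      simp only [Prod.mk.injEq] at h
      exact Prod.ext (Fin.succAbove_right_injective h.1) (Fin.succAbove_right_injective h.2)
    · intro p hp
      simp only [Finset.mem_filter, Finset.mem_univ, true_and] at hp
      obtain ⟨hlt, hne⟩ := hp
      push_neg at hne
      obtain ⟨k, hk⟩ := Fin.exists_succAbove_eq hne.1
      obtain ⟨l, hl⟩ := Fin.exists_succAbove_eq hne.2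
      refine ⟨(k, l), ?_, ?_⟩
      · simp only [Finset.mem_filter, Finset.mem_univ, true_and]
        exact Fin.succAbove_lt_succAbove_iff.mp (by rw [hk, hl]; exact hlt)
      · exact Prod.ext hk hl
    · intros; rfl

set_option maxHeartbeats 1000000 in
/-- (Lewis–Mahler inequality.)  Let
`F(x,y) = a₀ ∏ (x - α_j y)` be a binary form with integer coefficients, degree `n ≥ 3` and
nonzero discriminant `D = a₀^(2n-2) ∏_{i<j}(α_i - α_j)^2`.  For every pair of integers
`(x,y)` with `y ≠ 0` there is a root `α` of `F(z,1)` with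
`|α - x/y| ≤ 2^(n-1) n^(n-1/2) M(F)^(n-2) |F(x,y)| / (|D|^(1/2) |y|^n)`,
where `M(F) = |a₀| ∏ max(1,|α_j|)` is the Mahler measure of `F`. -/
theorem lewis_mahler (n : ℕ) (hn : 3 ≤ n) (a0 : ℤ) (ha0 : a0 ≠ 0) (α : Fin n → ℂ)
    (f : Polynomial ℤ) (hdeg : f.natDegree = n)
    (hf : f.map (Int.castRingHom ℂ) = C (a0 : ℂ) * ∏ i, (X - C (α i)))
    (D : ℂ)
    (hD : D = (a0 : ℂ) ^ (2 * n - 2) *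
      ∏ p ∈ Finset.univ.filter (fun p : Fin n × Fin n => p.1 < p.2), (α p.1 - α p.2) ^ 2)
    (hD0 : D ≠ 0)
    (M : ℝ) (hM : M = |(a0 : ℝ)| * ∏ i, max 1 (‖α i‖))
    (x y : ℤ) (hy : y ≠ 0) :
    ∃ i : Fin n, ‖α i - (x : ℂ) / (y : ℂ)‖ ≤
      2 ^ (n - 1) * (n : ℝ) ^ ((n : ℝ) - 1 / 2) * M ^ (n - 2) *
        ‖(a0 : ℂ) * ∏ j, ((x : ℂ) - α j * (y : ℂ))‖ /
      (Real.sqrt (‖D‖) * |(y : ℝ)| ^ n) := by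
  obtain ⟨m, rfl⟩ : ∃ m, n = m + 3 := ⟨n - 3, by omega⟩
  have hy' : (y : ℂ) ≠ 0 := Int.cast_ne_zero.mpr hy
  have hyR : (y : ℝ) ≠ 0 := Int.cast_ne_zero.mpr hy
  set β : ℂ := (x : ℂ) / (y : ℂ) with hβ
  obtain ⟨i₀, -, hmin⟩ := Finset.exists_min_image Finset.univ
    (fun i => ‖α i - β‖) ⟨0, Finset.mem_univ 0⟩
  refine ⟨i₀, ?_⟩
  set mm : ℝ := ∏ j, max 1 (‖α j‖) with hmm
  have hmm1 : (1:ℝ) ≤ mm := by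
    rw [hmm]
    calc (1:ℝ) = ∏ _j : Fin (m+3), 1 := by simp
      _ ≤ ∏ j, max 1 (‖α j‖) :=
        Finset.prod_le_prod (by simp) (fun j _ => le_max_left _ _)
  have ha0R : (1:ℝ) ≤ |(a0:ℝ)| := by
    rw [← Int.cast_abs]; exact_mod_cast Int.one_le_abs ha0
  set Pfull : ℝ := ∏ p ∈ univ.filter (fun p : Fin (m+3) × Fin (m+3) => p.1 < p.2),
    ‖α p.1 - α p.2‖ with hPfull
  have hPfull0 : 0 ≤ Pfull := Finset.prod_nonneg fun _ _ => norm_nonneg _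
  -- sqrt of |D|
  have habsD : ‖D‖ = (|(a0:ℝ)| ^ (m+2) * Pfull) ^ 2 := by
    have h24 : 2 * (m+3) - 2 = (m+2) * 2 := by omega
    calc ‖D‖
        = |(a0:ℝ)| ^ (2*(m+3)-2) *
          ∏ p ∈ univ.filter (fun p : Fin (m+3) × Fin (m+3) => p.1 < p.2),
            ‖α p.1 - α p.2‖ ^ 2 := by
          rw [hD, norm_mul, norm_pow, norm_prod, Complex.norm_intCast]
          exact congrArg _ (Finset.prod_congr rfl fun p _ => norm_pow _ _)
      _ = (|(a0:ℝ)| ^ (m+2) * Pfull) ^ 2 := by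
          rw [h24, pow_mul, mul_pow, Finset.prod_pow]
  have hsqrt : Real.sqrt (‖D‖) = |(a0:ℝ)| ^ (m+2) * Pfull := by
    rw [habsD, Real.sqrt_sq (mul_nonneg (pow_nonneg (abs_nonneg _) _) hPfull0)]
  -- value of |F(x,y)|
  have hFfac : ∀ j, ‖(x:ℂ) - α j * y‖ = |(y:ℝ)| * ‖α j - β‖ := by
    intro j
    have h : (x:ℂ) - α j * y = (y:ℂ) * (β - α j) := by
      rw [hβ]; field_simp
    rw [h, norm_mul, Complex.norm_intCast, norm_sub_rev]
  have hFval : ‖(a0:ℂ) * ∏ j, ((x:ℂ) - α j * (y:ℂ))‖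
      = |(a0:ℝ)| * (|(y:ℝ)| ^ (m+3) * ∏ j, ‖α j - β‖) := by
    rw [norm_mul, norm_prod, Complex.norm_intCast]
    congr 1
    calc ∏ j, ‖(x:ℂ) - α j * y‖
        = ∏ j, (|(y:ℝ)| * ‖α j - β‖) :=
          Finset.prod_congr rfl (fun j _ => hFfac j)
      _ = |(y:ℝ)| ^ (m+3) * ∏ j, ‖α j - β‖ := by
          rw [Finset.prod_mul_distrib, Finset.prod_const, Finset.card_univ, Fintype.card_fin]
  have hDpos : 0 < Real.sqrt (‖D‖) := Real.sqrt_pos.mpr (norm_pos_iff.mpr hD0)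
  have hypow : (0:ℝ) < |(y:ℝ)| ^ (m+3) := pow_pos (abs_pos.mpr hyR) _
  rw [le_div_iff₀ (mul_pos hDpos hypow)]
  have e1 : m + 3 - 1 = m + 2 := rfl
  have e2 : m + 3 - 2 = m + 1 := rfl
  rw [e1, e2]
  -- split the discriminant product at i₀
  have hsplit := split_pairs (fun i j => ‖α i - α j‖)
    (fun i j => norm_sub_rev _ _) i₀
  set Pin : ℝ := ∏ k : Fin (m+2), ‖α i₀ - α (i₀.succAbove k)‖ with hPin'
  set Pout : ℝ := ∏ q ∈ univ.filter (fun q : Fin (m+2) × Fin (m+2) => q.1 < q.2),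
    ‖α (i₀.succAbove q.1) - α (i₀.succAbove q.2)‖ with hPout'
  have hPout0 : 0 ≤ Pout := Finset.prod_nonneg fun _ _ => norm_nonneg _
  set Gp : ℝ := ∏ k : Fin (m+2), ‖α (i₀.succAbove k) - β‖ with hGp
  have hGp0 : 0 ≤ Gp := Finset.prod_nonneg fun _ _ => norm_nonneg _
  -- bound Pin
  have hPinB : Pin ≤ 2^(m+2) * Gp := by
    calc Pin ≤ ∏ k : Fin (m+2), (2 * ‖α (i₀.succAbove k) - β‖) := by
          apply Finset.prod_le_prod (fun _ _ => norm_nonneg _)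
          intro k _
          calc ‖α i₀ - α (i₀.succAbove k)‖
              ≤ ‖α i₀ - β‖ + ‖β - α (i₀.succAbove k)‖ :=
                norm_sub_le_norm_sub_add_norm_sub _ _ _
            _ = ‖α i₀ - β‖ + ‖α (i₀.succAbove k) - β‖ := by
                rw [norm_sub_rev β]
            _ ≤ ‖α (i₀.succAbove k) - β‖ + ‖α (i₀.succAbove k) - β‖ :=
                add_le_add_left (hmin _ (Finset.mem_univ _)) _
            _ = 2 * ‖α (i₀.succAbove k) - β‖ := (two_mul _).symm
      _ = 2^(m+2) * Gp := by
          rw [Finset.prod_mul_distrib, Finset.prod_const, Finset.card_univ, Fintype.card_fin, hGp]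
  -- bound Pout
  have hPoutB : Pout ≤ ((m+2).factorial : ℝ) * mm ^ (m+1) := by
    refine le_trans (vand_bound (fun k : Fin (m+2) => α (i₀.succAbove k))) ?_
    apply mul_le_mul_of_nonneg_left ?_ (by positivity)
    apply pow_le_pow_left₀ (Finset.prod_nonneg fun _ _ => by positivity)
    have h := Fin.prod_univ_succAbove (fun j => max 1 (‖α j‖)) i₀
    rw [hmm, h]
    exact le_mul_of_one_le_left
      (Finset.prod_nonneg fun _ _ => le_trans zero_le_one (le_max_left _ _)) (le_max_left _ _)
  -- factorial vs rpow
  set c : ℝ := ((m+3 : ℕ) : ℝ) ^ (((m+3 : ℕ) : ℝ) - 1/2) with hc'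
  have hcB : ((m+2).factorial : ℝ) ≤ c := by
    have h1 : ((m+2).factorial : ℝ) ≤ ((m+3 : ℕ) : ℝ) ^ (m+2 : ℕ) := by
      calc ((m+2).factorial : ℝ) ≤ (((m+2)^(m+2) : ℕ) : ℝ) :=
            Nat.cast_le.mpr (Nat.factorial_le_pow _)
        _ ≤ ((m+3 : ℕ) : ℝ) ^ (m+2 : ℕ) := by
            push_cast
            exact pow_le_pow_left₀ (by positivity) (by linarith) _
    refine h1.trans ?_
    rw [hc', ← Real.rpow_natCast (((m+3 : ℕ)) : ℝ) (m+2)]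
    apply Real.rpow_le_rpow_of_exponent_le (by push_cast; linarith)
    push_cast; linarith
  have hc0 : 0 ≤ c := Real.rpow_nonneg (by positivity) _
  have hgi0 : 0 ≤ ‖α i₀ - β‖ := norm_nonneg _
  -- key inequality
  have key : ‖α i₀ - β‖ * (|(a0:ℝ)|^(m+2) * Pfull) ≤
      2^(m+2) * c * M^(m+1) * (|(a0:ℝ)| * ∏ j, ‖α j - β‖) := by
    have hstep : Pin * Pout ≤ (2^(m+2) * Gp) * (((m+2).factorial : ℝ) * mm^(m+1)) :=
      mul_le_mul hPinB hPoutB hPout0 (mul_nonneg (by positivity) hGp0)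
    have hprod : ‖α i₀ - β‖ * Gp = ∏ j, ‖α j - β‖ :=
      (Fin.prod_univ_succAbove (fun j => ‖α j - β‖) i₀).symm
    calc ‖α i₀ - β‖ * (|(a0:ℝ)|^(m+2) * Pfull)
        = ‖α i₀ - β‖ * (|(a0:ℝ)|^(m+2) * (Pin * Pout)) := by rw [hPfull, hsplit]
      _ ≤ ‖α i₀ - β‖ *
            (|(a0:ℝ)|^(m+2) * ((2^(m+2) * Gp) * (((m+2).factorial : ℝ) * mm^(m+1)))) :=
          mul_le_mul_of_nonneg_left (mul_le_mul_of_nonneg_left hstep (by positivity)) hgi0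
      _ = 2^(m+2) * ((m+2).factorial : ℝ) * (|(a0:ℝ)|^(m+2) * mm^(m+1)) *
            (‖α i₀ - β‖ * Gp) := by ring
      _ ≤ 2^(m+2) * c * (|(a0:ℝ)|^(m+2) * mm^(m+1)) * (‖α i₀ - β‖ * Gp) := by
          have hmm0 : (0:ℝ) ≤ mm := le_trans zero_le_one hmm1
          apply mul_le_mul_of_nonneg_right _ (mul_nonneg hgi0 hGp0)
          apply mul_le_mul_of_nonneg_right _
            (mul_nonneg (pow_nonneg (abs_nonneg _) _) (pow_nonneg hmm0 _))
          exact mul_le_mul_of_nonneg_left hcB (by positivity)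
      _ = 2^(m+2) * c * M^(m+1) * (|(a0:ℝ)| * ∏ j, ‖α j - β‖) := by
          rw [← hprod, hM, mul_pow, pow_succ]; ring
  -- finish
  calc ‖α i₀ - β‖ * (Real.sqrt (‖D‖) * |(y:ℝ)| ^ (m+3))
      = (‖α i₀ - β‖ * (|(a0:ℝ)|^(m+2) * Pfull)) * |(y:ℝ)| ^ (m+3) := by
        rw [hsqrt]; ring
    _ ≤ (2^(m+2) * c * M^(m+1) * (|(a0:ℝ)| * ∏ j, ‖α j - β‖)) * |(y:ℝ)| ^ (m+3) :=
        mul_le_mul_of_nonneg_right key hypow.le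
    _ = 2 ^ (m + 2) * ((m+3 : ℕ) : ℝ) ^ (((m+3 : ℕ) : ℝ) - 1 / 2) * M ^ (m + 1) *
        ‖(a0 : ℂ) * ∏ j, ((x : ℂ) - α j * (y : ℂ))‖ := by
        rw [hFval, hc']; ring
end

section
/- Let F(x,y) be an irreducible binary form of degree n ≥ 3 with integer coefficients, and let α be a non-real root of F(X,1) = 0. Let m be a positive integer and suppose (x,y) ∈ ℤ² satisfies |F(x,y)| ≤ m and |x - αy| = min_{1≤j≤n} |x - α_j y| over all roots α_j of F(X,1). Then |y| ≤ (n+1) · m^{1/n} · 2^{(n-1)^2/n} · M(F)^{3 - 3/n} / (√3 · |D|)^{1/n}. -/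
set_option maxHeartbeats 1000000
open Finset Polynomial

section aux

private lemma card_pairs' {ι : Type*} [DecidableEq ι] [LinearOrder ι] (s : Finset ι) :
    2 * ((s ×ˢ s).filter (fun p => p.1 < p.2)).card = s.card * s.card - s.card := by
  have hB : (s.offDiag.filter (fun p => p.1 < p.2)) = (s ×ˢ s).filter (fun p => p.1 < p.2) := by
    ext p
    simp only [mem_filter, mem_offDiag, mem_product]
    constructor
    · rintro ⟨⟨h1, h2, _⟩, h4⟩; exact ⟨⟨h1, h2⟩, h4⟩
    · rintro ⟨⟨h1, h2⟩, h4⟩; exact ⟨⟨h1, h2, h4.ne⟩, h4⟩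
  have hsplit := Finset.card_filter_add_card_filter_not (s := s.offDiag) (p := fun p => p.1 < p.2)
  have hswap : (s.offDiag.filter (fun p => ¬ p.1 < p.2)).card
      = (s.offDiag.filter (fun p => p.1 < p.2)).card := by
    apply Finset.card_bij (fun p _ => Prod.swap p)
    · rintro ⟨a, b⟩ hp
      simp only [mem_filter, mem_offDiag] at hp ⊢
      exact ⟨⟨hp.1.2.1, hp.1.1, (Ne.symm hp.1.2.2)⟩, lt_of_le_of_ne (not_lt.mp hp.2) (Ne.symm hp.1.2.2)⟩
    · rintro ⟨a, b⟩ _ ⟨c, d⟩ _ h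
      have h2 := (Prod.ext_iff.mp h)
      simp only [Prod.swap_prod_mk] at h2
      exact Prod.ext h2.2 h2.1
    · rintro ⟨a, b⟩ hp
      refine ⟨(b, a), ?_, rfl⟩
      simp only [mem_filter, mem_offDiag] at hp ⊢
      exact ⟨⟨hp.1.2.1, hp.1.1, (Ne.symm hp.1.2.2)⟩, not_lt.mpr hp.2.le⟩
  rw [← hB, two_mul]
  rw [← Finset.offDiag_card]
  omega


private lemma prod_pairs_eq' {ι : Type*} [DecidableEq ι] [LinearOrder ι] (s : Finset ι)
    (g : ι → ℝ) (hg : ∀ i, 0 < g i) :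
    ∏ p ∈ (s ×ˢ s).filter (fun p => p.1 < p.2), (g p.1 * g p.2)
      = ∏ i ∈ s, g i ^ (s.card - 1) := by
  have hB : (s.offDiag.filter (fun p => p.1 < p.2)) = (s ×ˢ s).filter (fun p => p.1 < p.2) := by
    ext p
    simp only [mem_filter, mem_offDiag, mem_product]
    constructor
    · rintro ⟨⟨h1, h2, _⟩, h4⟩; exact ⟨⟨h1, h2⟩, h4⟩
    · rintro ⟨⟨h1, h2⟩, h4⟩; exact ⟨⟨h1, h2, h4.ne⟩, h4⟩
  -- product over offDiag of g p.1
  have h1 : (∏ p ∈ s.diag, g p.1) * ∏ p ∈ s.offDiag, g p.1 = ∏ p ∈ s ×ˢ s, g p.1 := by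
    rw [← Finset.prod_union (Finset.disjoint_diag_offDiag s), Finset.diag_union_offDiag]
  have h2 : ∏ p ∈ s ×ˢ s, g p.1 = ∏ i ∈ s, g i ^ s.card := by
    rw [Finset.prod_product' s s (fun i j => g i)]
    simp [Finset.prod_const]
  have h3 : ∏ p ∈ s.diag, g p.1 = ∏ i ∈ s, g i := by
    rw [Finset.prod_diag s (fun p => g p.1)]
  have hoff : ∏ p ∈ s.offDiag, g p.1
      = ∏ p ∈ s.offDiag.filter (fun p => p.1 < p.2), (g p.1 * g p.2) := by
    rw [← Finset.prod_filter_mul_prod_filter_not s.offDiag (fun p => p.1 < p.2) (fun p => g p.1)]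
    rw [Finset.prod_mul_distrib]
    congr 1
    apply Finset.prod_bij (fun p _ => Prod.swap p)
    · rintro ⟨a, b⟩ hp
      simp only [mem_filter, mem_offDiag] at hp ⊢
      exact ⟨⟨hp.1.2.1, hp.1.1, Ne.symm hp.1.2.2⟩, lt_of_le_of_ne (not_lt.mp hp.2) (Ne.symm hp.1.2.2)⟩
    · rintro ⟨a, b⟩ _ ⟨c, d⟩ _ h
      have h2 := (Prod.ext_iff.mp h)
      simp only [Prod.swap_prod_mk] at h2
      exact Prod.ext h2.2 h2.1
    · rintro ⟨a, b⟩ hp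
      refine ⟨(b, a), ?_, rfl⟩
      simp only [mem_filter, mem_offDiag] at hp ⊢
      exact ⟨⟨hp.1.2.1, hp.1.1, Ne.symm hp.1.2.2⟩, not_lt.mpr hp.2.le⟩
    · rintro ⟨a, b⟩ _; rfl
  rcases Finset.eq_empty_or_nonempty s with rfl | hs
  · simp
  · have hc : 1 ≤ s.card := Finset.card_pos.mpr hs
    have hgprod : 0 < ∏ i ∈ s, g i := Finset.prod_pos (fun i _ => hg i)
    rw [← hB, ← hoff]
    have : ∏ i ∈ s, g i ^ s.card = (∏ i ∈ s, g i ^ (s.card - 1)) * ∏ i ∈ s, g i := by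
      rw [← Finset.prod_mul_distrib]
      apply Finset.prod_congr rfl
      intro i _
      rw [← pow_succ]
      congr 1
      omega
    rw [this] at h2
    rw [h3] at h1
    apply mul_left_cancel₀ (ne_of_gt hgprod)
    rw [h1, h2]
    ring


private lemma alpha_inj' {n : ℕ} (hn : 3 ≤ n) (a0 : ℤ) (α : Fin n → ℂ)
    (f : ℤ[X]) (hdeg : f.natDegree = n) (hirr : Irreducible f)
    (hf : f.map (Int.castRingHom ℂ) = C (a0 : ℂ) * ∏ i, (X - C (α i))) :
    Function.Injective α := by
  have hprim : f.IsPrimitive := by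
    intro r hr
    obtain ⟨q, hq⟩ := hr
    rcases hirr.isUnit_or_isUnit hq with h | h
    · exact isUnit_C.mp h
    · exfalso
      have h1 : f.natDegree ≤ 0 := by
        calc f.natDegree = (C r * q).natDegree := by rw [hq]
        _ ≤ (C r).natDegree + q.natDegree := Polynomial.natDegree_mul_le
        _ ≤ 0 := by
            rw [Polynomial.natDegree_C, Polynomial.natDegree_eq_zero_of_isUnit h]
      omega
  have hQ : Irreducible (f.map (Int.castRingHom ℚ)) :=
    (Polynomial.IsPrimitive.Int.irreducible_iff_irreducible_map_cast hprim).mp hirr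
  have hsep : (f.map (Int.castRingHom ℚ)).Separable := hQ.separable
  have h2 : (f.map (Int.castRingHom ℚ)).map (algebraMap ℚ ℂ) = f.map (Int.castRingHom ℂ) := by
    rw [Polynomial.map_map, RingHom.ext_int ((algebraMap ℚ ℂ).comp (Int.castRingHom ℚ)) (Int.castRingHom ℂ)]
  have hsq : Squarefree (f.map (Int.castRingHom ℂ)) := by
    rw [← h2]
    exact hsep.map.squarefree
  intro i j hij
  by_contra hne
  rw [hf] at hsq
  have hji : j ∈ univ.erase i := Finset.mem_erase.mpr ⟨fun h => hne h.symm, mem_univ j⟩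
  have hsplit : ∏ l, (X - C (α l))
      = (X - C (α i)) * ((X - C (α j)) * ∏ l ∈ (univ.erase i).erase j, (X - C (α l))) := by
    rw [← Finset.mul_prod_erase univ _ (mem_univ i), ← Finset.mul_prod_erase _ _ hji]
  have hdvd : (X - C (α i)) * (X - C (α i)) ∣ C (a0 : ℂ) * ∏ l, (X - C (α l)) := by
    refine ⟨C (a0 : ℂ) * ∏ l ∈ (univ.erase i).erase j, (X - C (α l)), ?_⟩
    rw [hsplit, hij]
    ring
  exact Polynomial.not_isUnit_X_sub_C _ (hsq _ hdvd)


private lemma conj_root' {n : ℕ} (a0 : ℤ) (ha0 : a0 ≠ 0) (α : Fin n → ℂ)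
    (f : ℤ[X])
    (hf : f.map (Int.castRingHom ℂ) = C (a0 : ℂ) * ∏ i, (X - C (α i))) (k : Fin n) :
    ∃ j, α j = (starRingEnd ℂ) (α k) := by
  have h0 : (f.map (Int.castRingHom ℂ)).eval (α k) = 0 := by
    rw [hf, eval_mul, eval_prod]
    rw [Finset.prod_eq_zero (mem_univ k) (by simp)]
    ring
  have hcomp : (starRingEnd ℂ).comp (Int.castRingHom ℂ) = Int.castRingHom ℂ :=
    RingHom.ext_int _ _
  have hc : (f.map (Int.castRingHom ℂ)).eval ((starRingEnd ℂ) (α k)) = 0 := by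
    rw [eval_map] at h0 ⊢
    have := Polynomial.hom_eval₂ f (Int.castRingHom ℂ) (starRingEnd ℂ) (α k)
    rw [hcomp] at this
    rw [← this, h0]
    simp
  rw [hf, eval_mul, eval_C, eval_prod] at hc
  rcases mul_eq_zero.mp hc with h | h
  · exact absurd h (by exact_mod_cast ha0)
  · obtain ⟨j, _, hj⟩ := Finset.prod_eq_zero_iff.mp h
    simp only [eval_sub, eval_X, eval_C, sub_eq_zero] at hj
    exact ⟨j, hj.symm⟩


end aux

/-- Let `F(x,y) = a₀ ∏ (x - α_j y)` be an irreducible binary form of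
degree `n ≥ 3` with integer coefficients, discriminant `D` and Mahler measure `M(F)`.
Let `α_k` be a non-real root of `F(X,1)`, let `m ≥ 1` be an integer, and suppose
`(x,y) ∈ ℤ²` satisfies `|F(x,y)| ≤ m` and is related to `α_k`, i.e.
`|x - α_k y| = min_j |x - α_j y|`.  Then
`|y| ≤ (n+1) m^(1/n) 2^((n-1)²/n) M(F)^(3-3/n) / (√3 |D|)^(1/n)`. -/
theorem related_to_nonreal_root_bound (n : ℕ) (hn : 3 ≤ n) (a0 : ℤ) (ha0 : a0 ≠ 0)
    (α : Fin n → ℂ) (f : Polynomial ℤ) (hdeg : f.natDegree = n) (hirr : Irreducible f)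
    (hf : f.map (Int.castRingHom ℂ) = C (a0 : ℂ) * ∏ i, (X - C (α i)))
    (D : ℂ)
    (hD : D = (a0 : ℂ) ^ (2 * n - 2) *
      ∏ p ∈ Finset.univ.filter (fun p : Fin n × Fin n => p.1 < p.2), (α p.1 - α p.2) ^ 2)
    (M : ℝ) (hM : M = |(a0 : ℝ)| * ∏ i, max 1 (‖α i‖))
    (m : ℤ) (hm : 0 < m) (k : Fin n) (hk : (α k).im ≠ 0)
    (x y : ℤ)
    (hF : ‖(a0 : ℂ) * ∏ j, ((x : ℂ) - α j * (y : ℂ))‖ ≤ (m : ℝ))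
    (hrel : ∀ j : Fin n,
      ‖(x : ℂ) - α k * (y : ℂ)‖ ≤ ‖(x : ℂ) - α j * (y : ℂ)‖) :
    |(y : ℝ)| ≤ ((n : ℝ) + 1) * (m : ℝ) ^ ((1 : ℝ) / n) *
        (2 : ℝ) ^ (((n : ℝ) - 1) ^ 2 / n) * M ^ ((3 : ℝ) - 3 / n) /
      (Real.sqrt 3 * ‖D‖) ^ ((1 : ℝ) / n) := by
  obtain ⟨j0, hj0⟩ := conj_root' a0 ha0 α f hf k
  have hinj : Function.Injective α := alpha_inj' hn a0 α f hdeg hirr hf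
  have hj0k : j0 ≠ k := by
    intro h
    apply hk
    rw [h] at hj0
    exact (Complex.conj_eq_iff_im.mp hj0.symm)
  -- notation
  set a : ℝ := |(a0 : ℝ)| with ha_def
  set L : Fin n → ℝ := fun j => ‖(x : ℂ) - α j * (y : ℂ)‖ with hL_def
  set d : Fin n → ℝ := fun j => ‖α k - α j‖ with hd_def
  set μ : Fin n → ℝ := fun i => max 1 (‖α i‖) with hμ_def
  set t : ℝ := |(α k).im| with ht_def
  set Y : ℝ := |(y : ℝ)| with hY_def
  set s' : Finset (Fin n) := (univ.erase k).erase j0 with hs'_def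
  set P : ℝ := ∏ j ∈ s', d j with hP_def
  set pm : ℝ := ∏ i, μ i with hpm_def
  set W : ℝ := ∏ i ∈ univ.erase k, μ i ^ (n - 2) with hW_def
  have ha1 : (1 : ℝ) ≤ a := by
    rw [ha_def, ← Int.cast_abs]
    exact_mod_cast Int.one_le_abs ha0
  have ha0' : (0 : ℝ) ≤ a := le_trans zero_le_one ha1
  have hμ1 : ∀ i, (1 : ℝ) ≤ μ i := fun i => le_max_left _ _
  have hμ0 : ∀ i, (0 : ℝ) ≤ μ i := fun i => le_trans zero_le_one (hμ1 i)
  have hαμ : ∀ i, ‖α i‖ ≤ μ i := fun i => le_max_right _ _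
  have ht : 0 < t := abs_pos.mpr hk
  have hY0 : 0 ≤ Y := abs_nonneg _
  have hL0 : ∀ j, 0 ≤ L j := fun j => norm_nonneg _
  have hP0 : 0 ≤ P := Finset.prod_nonneg (fun j _ => norm_nonneg _)
  have hpm1 : 1 ≤ pm := by
    rw [hpm_def]
    have h := Finset.prod_le_prod (s := (univ : Finset (Fin n))) (f := fun _ => (1:ℝ))
      (g := μ) (fun i _ => zero_le_one) (fun i _ => hμ1 i)
    simpa using h
  have hpm0 : 0 ≤ pm := le_trans zero_le_one hpm1
  have hW0 : 0 ≤ W := Finset.prod_nonneg (fun i _ => pow_nonneg (hμ0 i) _)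
  have hMa : M = a * pm := hM
  have hM1 : 1 ≤ M := by
    rw [hMa]
    have h := mul_le_mul ha1 hpm1 zero_le_one ha0'
    simpa using h
  have hM0 : 0 ≤ M := le_trans zero_le_one hM1
  have hj0mem : j0 ∈ univ.erase k := Finset.mem_erase.mpr ⟨hj0k, mem_univ j0⟩
  have hcard_erase : (univ.erase k).card = n - 1 := by
    rw [Finset.card_erase_of_mem (mem_univ k), Finset.card_univ, Fintype.card_fin]
  have hs'card : s'.card = n - 2 := by
    rw [hs'_def, Finset.card_erase_of_mem hj0mem, hcard_erase]
    omega
  -- basic estimates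
  have hLk : t * Y ≤ L k := by
    have h1 : |((x : ℂ) - α k * (y : ℂ)).im| ≤ L k := Complex.abs_im_le_norm _
    have h2 : ((x : ℂ) - α k * (y : ℂ)).im = -((α k).im * (y : ℝ)) := by
      simp [Complex.sub_im, Complex.mul_im]
    rw [h2, abs_neg, abs_mul] at h1
    exact h1
  have hLj0 : L j0 = L k := by
    rw [hL_def]
    simp only
    rw [hj0]
    have : (x : ℂ) - (starRingEnd ℂ) (α k) * (y : ℂ)
        = (starRingEnd ℂ) ((x : ℂ) - α k * (y : ℂ)) := by
      rw [map_sub, map_mul]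
      simp
    rw [this, Complex.norm_conj]
  have hLk' : t * Y ≤ L j0 := hLj0 ▸ hLk
  have hdj0 : d j0 = 2 * t := by
    rw [hd_def]
    simp only
    rw [hj0, Complex.sub_conj, norm_mul, Complex.norm_I, Complex.norm_real, Real.norm_eq_abs]
    rw [abs_mul]
    simp [ht_def, abs_of_nonneg, mul_comm]
  have hd2L : ∀ j, d j * Y ≤ 2 * L j := by
    intro j
    have h1 : d j * Y = ‖(α k - α j) * (y : ℂ)‖ := by
      rw [norm_mul, Complex.norm_intCast]
    have h2 : (α k - α j) * (y : ℂ)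
        = ((x : ℂ) - α j * (y : ℂ)) - ((x : ℂ) - α k * (y : ℂ)) := by ring
    have h3 : ‖(α k - α j) * (y : ℂ)‖ ≤ L j + L k := by
      rw [h2]
      simpa using
        norm_sub_le ((x : ℂ) - α j * (y : ℂ)) ((x : ℂ) - α k * (y : ℂ))
    have h4 := hrel j
    rw [h1]
    calc ‖(α k - α j) * (y : ℂ)‖ ≤ L j + L k := h3
    _ ≤ 2 * L j := by rw [two_mul]; exact add_le_add le_rfl (hrel j)
  have hF' : a * ∏ j, L j ≤ (m : ℝ) := by
    rw [norm_mul, norm_prod, Complex.norm_intCast] at hF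
    exact hF
  -- step F4
  have hLsplit : ∏ j, L j = L k * (L j0 * ∏ j ∈ s', L j) := by
    rw [← Finset.mul_prod_erase univ L (mem_univ k), ← Finset.mul_prod_erase _ L hj0mem]
  have hPY : P * Y ^ (n - 2) ≤ 2 ^ (n - 2) * ∏ j ∈ s', L j := by
    calc P * Y ^ (n - 2) = ∏ j ∈ s', (d j * Y) := by
          rw [Finset.prod_mul_distrib, Finset.prod_const, hs'card]
    _ ≤ ∏ j ∈ s', (2 * L j) := by
          apply Finset.prod_le_prod
          · intro j _; positivity
          · intro j _; exact hd2L j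
    _ = 2 ^ (n - 2) * ∏ j ∈ s', L j := by
          rw [Finset.prod_mul_distrib, Finset.prod_const, hs'card]
  have hYn : Y ^ n = Y ^ 2 * Y ^ (n - 2) := by
    rw [← pow_add]; congr 1; omega
  have F4 : a * (t ^ 2 * (Y ^ n * P)) ≤ 2 ^ (n - 2) * (m : ℝ) := by
    have step1 : a * (t ^ 2 * (Y ^ n * P)) = a * ((t * Y) * ((t * Y) * (P * Y ^ (n - 2)))) := by
      rw [hYn]; ring
    rw [step1]
    calc a * ((t * Y) * ((t * Y) * (P * Y ^ (n - 2))))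
        ≤ a * ((t * Y) * ((t * Y) * (2 ^ (n - 2) * ∏ j ∈ s', L j))) := by
          have htY : 0 ≤ t * Y := mul_nonneg ht.le hY0
          exact mul_le_mul_of_nonneg_left (mul_le_mul_of_nonneg_left
            (mul_le_mul_of_nonneg_left hPY htY) htY) ha0'
    _ = 2 ^ (n - 2) * (a * ((t * Y) * ((t * Y) * ∏ j ∈ s', L j))) := by ring
    _ ≤ 2 ^ (n - 2) * (a * (L k * (L j0 * ∏ j ∈ s', L j))) := by
          have hprod : 0 ≤ ∏ j ∈ s', L j := Finset.prod_nonneg (fun j _ => hL0 j)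
          have htY : 0 ≤ t * Y := mul_nonneg ht.le hY0
          have h1 : (t * Y) * ((t * Y) * ∏ j ∈ s', L j) ≤ L k * (L j0 * ∏ j ∈ s', L j) := by
            apply mul_le_mul hLk (mul_le_mul_of_nonneg_right hLk' hprod)
              (mul_nonneg htY hprod) (hL0 k)
          have h2 := mul_le_mul_of_nonneg_left h1 ha0'
          have h3 : (0:ℝ) ≤ 2 ^ (n - 2) := by positivity
          exact mul_le_mul_of_nonneg_left h2 h3
    _ = 2 ^ (n - 2) * (a * ∏ j, L j) := by rw [hLsplit]
    _ ≤ 2 ^ (n - 2) * (m : ℝ) := by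
          have h3 : (0:ℝ) ≤ 2 ^ (n - 2) := by positivity
          exact mul_le_mul_of_nonneg_left hF' h3
  -- step F5 : discriminant expansion and bound
  have hdle : ∀ i j, ‖α i - α j‖ ≤ 2 * (μ i * μ j) := by
    intro i j
    have h1 : ‖α i - α j‖ ≤ ‖α i‖ + ‖α j‖ := by
      have := norm_sub_le (α i) (α j)
      simpa using this
    have h5 : (1:ℝ) ≤ μ i * μ j := by
      have := mul_le_mul (hμ1 i) (hμ1 j) zero_le_one (hμ0 i)
      simpa using this
    have h4 : (0:ℝ) ≤ (μ i - 1) * (μ j - 1) :=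
      mul_nonneg (sub_nonneg.mpr (hμ1 i)) (sub_nonneg.mpr (hμ1 j))
    calc ‖α i - α j‖ ≤ ‖α i‖ + ‖α j‖ := h1
    _ ≤ μ i + μ j := add_le_add (hαμ i) (hαμ j)
    _ ≤ 2 * (μ i * μ j) := by
        have he : μ i + μ j
            = 2 * (μ i * μ j) - ((μ i - 1) * (μ j - 1) + (μ i * μ j - 1)) := by ring
        rw [he]
        exact sub_le_self _ (add_nonneg h4 (sub_nonneg.mpr h5))
  have claim1 : ∏ p ∈ (Finset.univ.filter (fun p : Fin n × Fin n => p.1 < p.2)).filter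
        (fun p => p.1 = k ∨ p.2 = k), ‖α p.1 - α p.2‖
      = ∏ j ∈ univ.erase k, d j := by
    have hmem : ∀ p : Fin n × Fin n,
        p ∈ (Finset.univ.filter (fun p : Fin n × Fin n => p.1 < p.2)).filter
          (fun p => p.1 = k ∨ p.2 = k) ↔ (p.1 < p.2 ∧ (p.1 = k ∨ p.2 = k)) := by
      intro p; simp [Finset.mem_filter]
    apply Finset.prod_nbij' (i := fun p : Fin n × Fin n => if p.1 = k then p.2 else p.1)
      (j := fun j => if k < j then ((k, j) : Fin n × Fin n) else (j, k))
    · intro p hp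
      rw [hmem] at hp
      by_cases hpk : p.1 = k
      · have hk2 : k < p.2 := by rw [← hpk]; exact hp.1
        rw [if_pos hpk]
        exact Finset.mem_erase.mpr ⟨ne_of_gt hk2, Finset.mem_univ _⟩
      · rw [if_neg hpk]
        exact Finset.mem_erase.mpr ⟨hpk, Finset.mem_univ _⟩
    · intro j hj
      have hjk := (Finset.mem_erase.mp hj).1
      rw [hmem]
      rcases hjk.lt_or_gt with h | h
      · rw [if_neg (not_lt.mpr h.le)]
        exact ⟨h, Or.inr rfl⟩
      · rw [if_pos h]
        exact ⟨h, Or.inl rfl⟩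
    · intro p hp
      rw [hmem] at hp
      by_cases hpk : p.1 = k
      · have hk2 : k < p.2 := by rw [← hpk]; exact hp.1
        rw [if_pos hpk, if_pos hk2]
        exact Prod.ext hpk.symm rfl
      · have hp2 : p.2 = k := hp.2.resolve_left hpk
        have hlt : p.1 < k := by rw [← hp2]; exact hp.1
        rw [if_neg hpk, if_neg (not_lt.mpr hlt.le)]
        exact Prod.ext rfl hp2.symm
    · intro j hj
      have hjk := (Finset.mem_erase.mp hj).1
      rcases hjk.lt_or_gt with h | h
      · rw [if_neg (not_lt.mpr h.le)]
        show (if j = k then k else j) = j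
        rw [if_neg hjk]
      · rw [if_pos h]
        show (if k = k then j else k) = j
        rw [if_pos rfl]
    · intro p hp
      rw [hmem] at hp
      by_cases hpk : p.1 = k
      · rw [if_pos hpk, hd_def]
        simp only
        rw [hpk]
      · have hp2 : p.2 = k := hp.2.resolve_left hpk
        rw [if_neg hpk, hd_def]
        simp only
        rw [hp2, norm_sub_rev]
  -- discriminant expansion
  have hm0 : (0:ℝ) ≤ (m:ℝ) := by exact_mod_cast hm.le
  have habsD : ‖D‖ = a ^ (2*n-2)
      * ∏ p ∈ Finset.univ.filter (fun p : Fin n × Fin n => p.1 < p.2),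
          ‖α p.1 - α p.2‖ ^ 2 := by
    rw [hD, norm_mul, norm_pow, norm_prod]
    simp only [norm_pow]
    rw [Complex.norm_intCast]
  have hsplit2 : ∏ p ∈ Finset.univ.filter (fun p : Fin n × Fin n => p.1 < p.2),
        ‖α p.1 - α p.2‖ ^ 2
      = (∏ p ∈ (Finset.univ.filter (fun p : Fin n × Fin n => p.1 < p.2)).filter
            (fun p => p.1 = k ∨ p.2 = k), ‖α p.1 - α p.2‖ ^ 2)
        * ∏ p ∈ (Finset.univ.filter (fun p : Fin n × Fin n => p.1 < p.2)).filter
            (fun p => ¬(p.1 = k ∨ p.2 = k)), ‖α p.1 - α p.2‖ ^ 2 :=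
    (Finset.prod_filter_mul_prod_filter_not _ _ _).symm
  have hdk : ∏ j ∈ univ.erase k, d j = 2 * t * P := by
    rw [← Finset.mul_prod_erase _ d hj0mem, hdj0, ← hs'_def, ← hP_def]
  have hpart1 : ∏ p ∈ (Finset.univ.filter (fun p : Fin n × Fin n => p.1 < p.2)).filter
        (fun p => p.1 = k ∨ p.2 = k), ‖α p.1 - α p.2‖ ^ 2 = (2 * t * P)^2 := by
    rw [Finset.prod_pow, claim1, hdk]
  have hBeq : (Finset.univ.filter (fun p : Fin n × Fin n => p.1 < p.2)).filter
        (fun p => ¬(p.1 = k ∨ p.2 = k))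
      = ((univ.erase k) ×ˢ (univ.erase k)).filter (fun p => p.1 < p.2) := by
    ext p
    simp only [Finset.mem_filter, Finset.mem_product, Finset.mem_erase, Finset.mem_univ,
      true_and, and_true]
    tauto
  have hcard2 : 2 * (((univ.erase k) ×ˢ (univ.erase k)).filter
      (fun p : Fin n × Fin n => p.1 < p.2)).card = (n-1)*(n-2) := by
    rw [card_pairs', hcard_erase]
    obtain ⟨p, rfl⟩ : ∃ p, n = p + 3 := ⟨n - 3, by omega⟩
    have e1 : (p+3-1) = p+2 := by omega
    have e2 : (p+3-2) = p+1 := by omega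
    rw [e1, e2]
    have e3 : (p+2)*(p+2) = p*p+4*p+4 := by ring
    have e4 : (p+2)*(p+1) = p*p+3*p+2 := by ring
    omega
  have hQprod : ∏ p ∈ ((univ.erase k) ×ˢ (univ.erase k)).filter
        (fun p : Fin n × Fin n => p.1 < p.2), (μ p.1 * μ p.2)
      = ∏ i ∈ univ.erase k, μ i ^ ((univ.erase k).card - 1) :=
    prod_pairs_eq' _ μ (fun i => lt_of_lt_of_le zero_lt_one (hμ1 i))
  have hQb : ∏ p ∈ (Finset.univ.filter (fun p : Fin n × Fin n => p.1 < p.2)).filter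
        (fun p => ¬(p.1 = k ∨ p.2 = k)), ‖α p.1 - α p.2‖ ^ 2
      ≤ 2^((n-1)*(n-2)) * W^2 := by
    rw [hBeq]
    calc ∏ p ∈ ((univ.erase k) ×ˢ (univ.erase k)).filter
          (fun p : Fin n × Fin n => p.1 < p.2), ‖α p.1 - α p.2‖ ^ 2
        ≤ ∏ p ∈ ((univ.erase k) ×ˢ (univ.erase k)).filter
          (fun p : Fin n × Fin n => p.1 < p.2), (4 * (μ p.1 * μ p.2) ^ 2) := by
          apply Finset.prod_le_prod
          · intro p _; positivity
          · intro p _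
            have h := hdle p.1 p.2
            have h0 : (0:ℝ) ≤ ‖α p.1 - α p.2‖ := norm_nonneg _
            have he : (4:ℝ) * (μ p.1 * μ p.2) ^ 2 = (2 * (μ p.1 * μ p.2))^2 := by ring
            rw [he]
            exact pow_le_pow_left₀ h0 h 2
    _ = 4 ^ (((univ.erase k) ×ˢ (univ.erase k)).filter
          (fun p : Fin n × Fin n => p.1 < p.2)).card
        * (∏ p ∈ ((univ.erase k) ×ˢ (univ.erase k)).filter
          (fun p : Fin n × Fin n => p.1 < p.2), (μ p.1 * μ p.2)) ^ 2 := by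
          rw [Finset.prod_mul_distrib, Finset.prod_const, Finset.prod_pow]
    _ = 2^((n-1)*(n-2)) * W^2 := by
          rw [hQprod, hcard_erase]
          have hee : (n - 1) - 1 = n - 2 := by omega
          rw [hee, ← hW_def]
          congr 1
          have : (4:ℝ) = 2^2 := by norm_num
          rw [this, ← pow_mul, ← hcard2]
  have F5 : ‖D‖ ≤ a^(2*n-2) * ((2*t*P)^2 * (2^((n-1)*(n-2)) * W^2)) := by
    rw [habsD, hsplit2, hpart1]
    apply mul_le_mul_of_nonneg_left _ (pow_nonneg ha0' _)
    apply mul_le_mul_of_nonneg_left hQb (sq_nonneg _)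
  -- F6
  have F6 : P ≤ 2^(n-2) * (μ k ^ (n-2) * ∏ j ∈ s', μ j) := by
    calc P ≤ ∏ j ∈ s', (2 * (μ k * μ j)) := by
          rw [hP_def]
          apply Finset.prod_le_prod
          · intro j _; exact norm_nonneg _
          · intro j _; exact hdle k j
    _ = 2^(n-2) * (μ k ^ (n-2) * ∏ j ∈ s', μ j) := by
          rw [Finset.prod_mul_distrib, Finset.prod_mul_distrib,
            Finset.prod_const, Finset.prod_const, hs'card]
  -- Mahler bounds
  have hWb : W ≤ pm^(n-2) := by
    have h1 : pm^(n-2) = μ k ^ (n-2) * W := by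
      rw [hpm_def, ← Finset.prod_pow, ← Finset.mul_prod_erase _ _ (mem_univ k), hW_def]
    rw [h1]
    exact le_mul_of_one_le_left hW0 (one_le_pow₀ (hμ1 k))
  have hμk : μ k ≤ pm := by
    have h1 : pm = μ k * ∏ i ∈ univ.erase k, μ i := by
      rw [hpm_def, ← Finset.mul_prod_erase _ μ (mem_univ k)]
    have h2 : (1:ℝ) ≤ ∏ i ∈ univ.erase k, μ i := by
      have := Finset.prod_le_prod (s := univ.erase k) (f := fun _ => (1:ℝ))
        (g := μ) (fun i _ => zero_le_one) (fun i _ => hμ1 i)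
      simpa using this
    rw [h1]
    exact le_mul_of_one_le_right (hμ0 k) h2
  have hs'μ : ∏ j ∈ s', μ j ≤ pm := by
    have h1 : pm = μ k * (μ j0 * ∏ j ∈ s', μ j) := by
      rw [hpm_def, ← Finset.mul_prod_erase _ μ (mem_univ k),
        ← Finset.mul_prod_erase _ μ hj0mem, ← hs'_def]
    have hS0 : (0:ℝ) ≤ ∏ j ∈ s', μ j := Finset.prod_nonneg (fun j _ => hμ0 j)
    rw [h1]
    calc ∏ j ∈ s', μ j ≤ μ j0 * ∏ j ∈ s', μ j := le_mul_of_one_le_left hS0 (hμ1 j0)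
    _ ≤ μ k * (μ j0 * ∏ j ∈ s', μ j) :=
        le_mul_of_one_le_left (mul_nonneg (hμ0 j0) hS0) (hμ1 k)
  -- main chain
  have hae : a^(2*n-2) = a^(2*n-3) * a := by
    rw [← pow_succ]
    congr 1
    omega
  have hWP0 : 0 ≤ W^2 * P := mul_nonneg (by positivity) hP0
  have hpre0 : (0:ℝ) ≤ 2^((n-1)*(n-2)+2) * a^(2*n-3) * W^2 * P := by
    apply mul_nonneg (mul_nonneg (mul_nonneg (by positivity) (pow_nonneg ha0' _)) (by positivity)) hP0
  have hpre1 : (0:ℝ) ≤ 2^((n-1)*(n-2)+2) * 2^(n-2) * (m:ℝ) * a^(2*n-3) * W^2 := by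
    apply mul_nonneg (mul_nonneg (mul_nonneg (mul_nonneg (by positivity) (by positivity)) hm0)
      (pow_nonneg ha0' _)) (by positivity)
  have chain : Y^n * ‖D‖
      ≤ 2^((n-1)*(n-2) + 2*(n-2) + 2) * (m:ℝ) * M^(3*n-3) := by
    calc Y^n * ‖D‖
        ≤ Y^n * (a^(2*n-2) * ((2*t*P)^2 * (2^((n-1)*(n-2)) * W^2))) :=
          mul_le_mul_of_nonneg_left F5 (pow_nonneg hY0 n)
    _ = (2^((n-1)*(n-2)+2) * a^(2*n-3) * W^2 * P) * (a * (t^2 * (Y^n * P))) := by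
          rw [hae, pow_add]
          ring
    _ ≤ (2^((n-1)*(n-2)+2) * a^(2*n-3) * W^2 * P) * (2^(n-2) * (m:ℝ)) :=
          mul_le_mul_of_nonneg_left F4 hpre0
    _ = (2^((n-1)*(n-2)+2) * 2^(n-2) * (m:ℝ) * a^(2*n-3) * W^2) * P := by ring
    _ ≤ (2^((n-1)*(n-2)+2) * 2^(n-2) * (m:ℝ) * a^(2*n-3) * W^2)
          * (2^(n-2) * (μ k ^ (n-2) * ∏ j ∈ s', μ j)) :=
          mul_le_mul_of_nonneg_left F6 hpre1
    _ = (2^((n-1)*(n-2) + 2*(n-2) + 2) * (m:ℝ))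
          * (a^(2*n-3) * (W^2 * (μ k ^ (n-2) * ∏ j ∈ s', μ j))) := by
          rw [show (n-1)*(n-2) + 2*(n-2) + 2 = ((n-1)*(n-2)+2) + (n-2) + (n-2) by ring]
          rw [pow_add, pow_add]
          ring
    _ ≤ (2^((n-1)*(n-2) + 2*(n-2) + 2) * (m:ℝ))
          * (a^(3*n-3) * (pm^(2*(n-2)) * (pm^(n-2) * pm))) := by
          apply mul_le_mul_of_nonneg_left _ (by positivity)
          apply mul_le_mul (pow_le_pow_right₀ ha1 (by omega))
          · apply mul_le_mul
            · calc W^2 ≤ (pm^(n-2))^2 := pow_le_pow_left₀ (by positivity) hWb 2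
              _ = pm^(2*(n-2)) := by rw [← pow_mul, Nat.mul_comm]
            · exact mul_le_mul (pow_le_pow_left₀ (hμ0 k) hμk _) hs'μ
                (Finset.prod_nonneg (fun j _ => hμ0 j)) (by positivity)
            · exact mul_nonneg (pow_nonneg (hμ0 k) _) (Finset.prod_nonneg (fun j _ => hμ0 j))
            · positivity
          · exact mul_nonneg (by positivity)
              (mul_nonneg (pow_nonneg (hμ0 k) _) (Finset.prod_nonneg (fun j _ => hμ0 j)))
          · exact pow_nonneg ha0' _
    _ ≤ (2^((n-1)*(n-2) + 2*(n-2) + 2) * (m:ℝ)) * (a^(3*n-3) * pm^(3*n-3)) := by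
          apply mul_le_mul_of_nonneg_left _ (by positivity)
          apply mul_le_mul_of_nonneg_left _ (pow_nonneg ha0' _)
          calc pm^(2*(n-2)) * (pm^(n-2) * pm) = pm^(2*(n-2) + ((n-2)+1)) := by
                rw [← pow_succ, ← pow_add]
          _ ≤ pm^(3*n-3) := pow_le_pow_right₀ hpm1 (by omega)
    _ = (2^((n-1)*(n-2) + 2*(n-2) + 2) * (m:ℝ)) * M^(3*n-3) := by
          rw [hMa, mul_pow]
  -- throw in sqrt 3
  have hs3 : Real.sqrt 3 ≤ 2 := by
    have h4 : Real.sqrt 4 = 2 := by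
      rw [show (4:ℝ) = 2^2 by norm_num, Real.sqrt_sq (by norm_num : (0:ℝ) ≤ 2)]
    rw [← h4]
    exact Real.sqrt_le_sqrt (by norm_num)
  have hs3pos : 0 < Real.sqrt 3 := Real.sqrt_pos.mpr (by norm_num)
  have hEnat : (n-1)*(n-2) + 2*(n-2) + 2 + 1 = (n-1)^2 + n := by
    obtain ⟨p, rfl⟩ : ∃ p, n = p + 3 := ⟨n - 3, by omega⟩
    have e1 : (p+3-1) = p+2 := by omega
    have e2 : (p+3-2) = p+1 := by omega
    rw [e1, e2]
    ring
  have hcast2 : (2:ℝ) ≤ (n:ℝ) + 1 := by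
    have h1n : (1:ℝ) ≤ (n:ℝ) := by exact_mod_cast (show 1 ≤ n by omega)
    have := add_le_add h1n (le_refl (1:ℝ))
    norm_num at this
    exact this
  have habsD0 : 0 ≤ ‖D‖ := norm_nonneg _
  have hmain : Y^n * (Real.sqrt 3 * ‖D‖)
      ≤ ((n:ℝ)+1)^n * (m:ℝ) * 2^((n-1)^2) * M^(3*n-3) := by
    have hYD : 0 ≤ Y^n * ‖D‖ := mul_nonneg (pow_nonneg hY0 n) habsD0
    calc Y^n * (Real.sqrt 3 * ‖D‖) = Real.sqrt 3 * (Y^n * ‖D‖) := by ring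
    _ ≤ 2 * (2^((n-1)*(n-2) + 2*(n-2) + 2) * (m:ℝ) * M^(3*n-3)) := by
        apply mul_le_mul hs3 chain hYD (by norm_num)
    _ = 2^((n-1)*(n-2) + 2*(n-2) + 2 + 1) * (m:ℝ) * M^(3*n-3) := by
        rw [pow_succ]
        ring
    _ = 2^((n-1)^2) * 2^n * (m:ℝ) * M^(3*n-3) := by
        rw [hEnat, pow_add]
    _ ≤ 2^((n-1)^2) * ((n:ℝ)+1)^n * (m:ℝ) * M^(3*n-3) := by
        apply mul_le_mul_of_nonneg_right _ (by positivity)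
        apply mul_le_mul_of_nonneg_right _ hm0
        apply mul_le_mul_of_nonneg_left (pow_le_pow_left₀ (by norm_num) hcast2 n) (by positivity)
    _ = ((n:ℝ)+1)^n * (m:ℝ) * 2^((n-1)^2) * M^(3*n-3) := by ring
  -- positivity of discriminant
  have hDne : D ≠ 0 := by
    rw [hD]
    apply mul_ne_zero
    · exact pow_ne_zero _ (by exact_mod_cast ha0)
    · rw [Finset.prod_ne_zero_iff]
      intro p hp
      apply pow_ne_zero
      rw [sub_ne_zero]
      intro hpp
      have h1 := hinj hpp
      have hlt : p.1 < p.2 := (Finset.mem_filter.mp hp).2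
      exact absurd h1 (ne_of_lt hlt)
  have habsDpos : 0 < ‖D‖ := norm_pos_iff.mpr hDne
  have hc : 0 < Real.sqrt 3 * ‖D‖ := mul_pos hs3pos habsDpos
  -- final rpow computation
  have hnne : (n:ℝ) ≠ 0 := Nat.cast_ne_zero.mpr (by omega)
  have hmpos : (0:ℝ) < (m:ℝ) := by exact_mod_cast hm
  have hm' : ((m:ℝ)^((1:ℝ)/n))^n = (m:ℝ) := by
    rw [← Real.rpow_natCast ((m:ℝ)^((1:ℝ)/n)) n, ← Real.rpow_mul hm0, one_div,
      inv_mul_cancel₀ hnne, Real.rpow_one]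
  have h2' : (((2:ℝ))^(((n:ℝ)-1)^2/n))^n = (2:ℝ)^((n-1)^2) := by
    rw [← Real.rpow_natCast ((2:ℝ)^(((n:ℝ)-1)^2/n)) n, ← Real.rpow_mul (by norm_num),
      div_mul_cancel₀ _ hnne]
    have hc1 : ((n:ℝ)-1)^2 = (((n-1)^2 : ℕ) : ℝ) := by
      rw [Nat.cast_pow, Nat.cast_sub (by omega : 1 ≤ n), Nat.cast_one]
    rw [hc1, Real.rpow_natCast]
  have hM' : (M^((3:ℝ) - 3/n))^n = M^(3*n-3) := by
    rw [← Real.rpow_natCast (M^((3:ℝ) - 3/n)) n, ← Real.rpow_mul hM0]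
    have hc1 : ((3:ℝ) - 3/n) * n = ((3*n-3 : ℕ) : ℝ) := by
      rw [Nat.cast_sub (by omega : 3 ≤ 3*n), Nat.cast_mul]
      push_cast
      field_simp
    rw [hc1, Real.rpow_natCast]
  have hden' : (((Real.sqrt 3 * ‖D‖))^((1:ℝ)/n))^n = Real.sqrt 3 * ‖D‖ := by
    rw [← Real.rpow_natCast ((Real.sqrt 3 * ‖D‖)^((1:ℝ)/n)) n,
      ← Real.rpow_mul hc.le, one_div, inv_mul_cancel₀ hnne, Real.rpow_one]
  set Z : ℝ := ((n : ℝ) + 1) * (m : ℝ) ^ ((1 : ℝ) / n) *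
        (2 : ℝ) ^ (((n : ℝ) - 1) ^ 2 / n) * M ^ ((3 : ℝ) - 3 / n) /
      (Real.sqrt 3 * ‖D‖) ^ ((1 : ℝ) / n) with hZ_def
  have hZ0 : 0 ≤ Z := by
    rw [hZ_def]
    apply div_nonneg _ (Real.rpow_nonneg hc.le _)
    apply mul_nonneg (mul_nonneg (mul_nonneg (by positivity) (Real.rpow_nonneg hm0 _))
      (Real.rpow_nonneg (by norm_num) _)) (Real.rpow_nonneg hM0 _)
  have hZn : Z^n = (((n:ℝ)+1)^n * (m:ℝ) * 2^((n-1)^2) * M^(3*n-3))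
      / (Real.sqrt 3 * ‖D‖) := by
    rw [hZ_def, div_pow, hden', mul_pow, mul_pow, mul_pow, hm', h2', hM']
  have hfin : Y^n ≤ Z^n := by
    rw [hZn, le_div_iff₀ hc]
    exact hmain
  exact le_of_pow_le_pow_left₀ (by omega) hZ0 hfin
end

section
/- Let α_1, ..., α_n be distinct complex numbers, fix α_n, and for t ∈ ℝ with t ≠ α_i for all i, define β_i = α_i for i ≤ n-1 and β_i = α_{i-n+1} for i ≥ n. Then Σ_{k=1}^{n-2} Σ_{i=1}^{n-1} (log |(t - β_i)(α_n - β_{i+k}) / ((α_n - β_i)(t - β_{i+k}))|)² = (2n-2) · ‖Σ_{i=1}^{n-1} log(|t - α_i|/|α_n - α_i|) c_i‖², where c_1, ..., c_{n-1} ∈ ℝ^n are defined by c_i = b_i + (1/(n-1)) b_n with b_i = (1/n)(-1,...,-1, n-1, -1,...,-1) (the entry n-1 in position i). -/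
open Finset

private lemma cyc_sum_left (M : ℕ) (g : ℕ → ℝ) (k : ℕ) (hk1 : 1 ≤ k) (hk2 : k ≤ M - 1) :
    ∑ i ∈ Icc 1 M, g (if i + k ≤ M then i + k else i + k - M) = ∑ i ∈ Icc 1 M, g i := by
  refine Finset.sum_nbij' (fun i => if i + k ≤ M then i + k else i + k - M)
    (fun j => if j + (M - k) ≤ M then j + (M - k) else j + (M - k) - M) ?_ ?_ ?_ ?_ ?_ <;>
    intro a ha <;> simp only [mem_Icc] at * <;> split_ifs <;> omega

private lemma cyc_sum_right (M : ℕ) (g : ℕ → ℝ) (i : ℕ) (hi1 : 1 ≤ i) (hi2 : i ≤ M) :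
    ∑ k ∈ Icc 0 (M - 1), g (if i + k ≤ M then i + k else i + k - M) = ∑ j ∈ Icc 1 M, g j := by
  refine Finset.sum_nbij' (fun k => if i + k ≤ M then i + k else i + k - M)
    (fun j => if i ≤ j then j - i else j + M - i) ?_ ?_ ?_ ?_ ?_ <;>
    intro a ha <;> simp only [mem_Icc] at * <;> split_ifs <;> omega

/-- Let `α₁, …, αₙ` be distinct complex numbers, `t ∈ ℝ` with `t ≠ α_i`
for all `i`, and set `β_i = α_i` for `i ≤ n-1`, `β_i = α_{i-n+1}` for `i ≥ n`.  Then
`Σ_{k=1}^{n-2} Σ_{i=1}^{n-1} (log |(t-β_i)(αₙ-β_{i+k}) / ((αₙ-β_i)(t-β_{i+k}))|)²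
  = (2n-2) ‖Σ_{i=1}^{n-1} log(|t-α_i|/|αₙ-α_i|) c_i‖²`,
where `c_i = b_i + (1/(n-1)) bₙ` and `b_i ∈ ℝⁿ` has entries `-1/n` except `(n-1)/n` in
position `i`. -/
theorem distance_identity (n : ℕ) (hn : 3 ≤ n) (α : ℕ → ℂ)
    (hdist : ∀ i ∈ Finset.Icc 1 n, ∀ j ∈ Finset.Icc 1 n, i ≠ j → α i ≠ α j)
    (β : ℕ → ℂ)
    (hβ1 : ∀ i, 1 ≤ i → i ≤ n - 1 → β i = α i)
    (hβ2 : ∀ i, n ≤ i → β i = α (i - n + 1))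
    (t : ℝ) (ht : ∀ i ∈ Finset.Icc 1 n, (t : ℂ) ≠ α i)
    (b : ℕ → EuclideanSpace ℝ (Fin n))
    (hb : ∀ i ∈ Finset.Icc 1 n, ∀ j : Fin n,
      b i j = if (j : ℕ) + 1 = i then ((n : ℝ) - 1) / n else -(1 / n))
    (c : ℕ → EuclideanSpace ℝ (Fin n))
    (hc : ∀ i ∈ Finset.Icc 1 (n - 1), c i = b i + (((n : ℝ) - 1))⁻¹ • b n) :
    ∑ k ∈ Finset.Icc 1 (n - 2), ∑ i ∈ Finset.Icc 1 (n - 1),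
        (Real.log (‖((t : ℂ) - β i) * (α n - β (i + k)) /
          ((α n - β i) * ((t : ℂ) - β (i + k)))‖)) ^ 2 =
      (2 * (n : ℝ) - 2) *
        ‖∑ i ∈ Finset.Icc 1 (n - 1),
          Real.log (‖(t : ℂ) - α i‖ / ‖α n - α i‖) • c i‖ ^ 2 := by
  set M : ℕ := n - 1 with hM
  -- the basic log quantities
  set L : ℕ → ℝ := fun i =>
    Real.log (‖(t : ℂ) - α i‖) - Real.log (‖α n - α i‖) with hL
  set S1 : ℝ := ∑ i ∈ Icc 1 M, L i with hS1
  set S2 : ℝ := ∑ i ∈ Icc 1 M, (L i) ^ 2 with hS2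
  have hnR : (1 : ℝ) < (n : ℝ) := by exact_mod_cast by omega
  have hMR : ((M : ℕ) : ℝ) = (n : ℝ) - 1 := by
    have : (M : ℕ) + 1 = n := by omega
    push_cast [← this]; ring
  -- nonvanishing facts
  have habs_t : ∀ i ∈ Icc 1 n, ‖(t : ℂ) - α i‖ ≠ 0 := fun i hi => by
    simpa [sub_eq_zero] using ht i hi
  have habs_a : ∀ i ∈ Icc 1 M, ‖α n - α i‖ ≠ 0 := fun i hi => by
    simp only [mem_Icc] at hi
    have := hdist n (by simp [mem_Icc]; omega) i (by simp [mem_Icc]; omega) (by omega)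
    simpa [sub_eq_zero] using this
  -- LHS term identification
  have cyc_mem : ∀ i ∈ Icc 1 M, ∀ k ∈ Icc 1 (M - 1),
      (if i + k ≤ M then i + k else i + k - M) ∈ Icc 1 M := by
    intro i hi k hk; simp only [mem_Icc] at *; split_ifs <;> omega
  have hterm : ∀ i ∈ Icc 1 M, ∀ k ∈ Icc 1 (M - 1),
      Real.log (‖((t : ℂ) - β i) * (α n - β (i + k)) /
        ((α n - β i) * ((t : ℂ) - β (i + k)))‖) =
      L i - L (if i + k ≤ M then i + k else i + k - M) := by
    intro i hi k hk
    have hi' := mem_Icc.mp hi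
    have hk' := mem_Icc.mp hk
    set m := if i + k ≤ M then i + k else i + k - M with hm
    have hmmem : m ∈ Icc 1 M := cyc_mem i hi k hk
    have hm' := mem_Icc.mp hmmem
    have hβi : β i = α i := hβ1 i hi'.1 hi'.2
    have hβik : β (i + k) = α m := by
      by_cases h : i + k ≤ M
      · rw [hβ1 (i + k) (by omega) (by omega)]; simp [hm, if_pos h]
      · rw [hβ2 (i + k) (by omega)]
        congr 1
        simp only [hm, if_neg h]
        omega
    have hiN : i ∈ Icc 1 n := by simp [mem_Icc]; omega
    have hmN : m ∈ Icc 1 n := by simp [mem_Icc]; omega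
    have h1 := habs_t i hiN
    have h2 := habs_t m hmN
    have h3 := habs_a i hi
    have h4 := habs_a m hmmem
    rw [hβi, hβik, norm_div, norm_mul, norm_mul,
      Real.log_div (by positivity) (by positivity),
      Real.log_mul h1 h4, Real.log_mul h3 h2]
    simp only [hL]; ring
  -- LHS computation
  have hLHS : ∑ k ∈ Finset.Icc 1 (n - 2), ∑ i ∈ Finset.Icc 1 (n - 1),
        (Real.log (‖((t : ℂ) - β i) * (α n - β (i + k)) /
          ((α n - β i) * ((t : ℂ) - β (i + k)))‖)) ^ 2
      = 2 * ((n : ℝ) - 1) * S2 - 2 * S1 ^ 2 := by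
    have hn2 : n - 2 = M - 1 := by omega
    rw [hn2]
    have step1 : ∀ k ∈ Icc 1 (M - 1),
        ∑ i ∈ Icc 1 M, (Real.log (‖((t : ℂ) - β i) * (α n - β (i + k)) /
          ((α n - β i) * ((t : ℂ) - β (i + k)))‖)) ^ 2
        = 2 * S2 - 2 * ∑ i ∈ Icc 1 M, L i * L (if i + k ≤ M then i + k else i + k - M) := by
      intro k hk
      have hk' := mem_Icc.mp hk
      rw [Finset.sum_congr rfl (fun i hi => by rw [hterm i hi k hk])]
      have expand : ∀ i ∈ Icc 1 M,
          (L i - L (if i + k ≤ M then i + k else i + k - M)) ^ 2 =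
          (L i) ^ 2 + (L (if i + k ≤ M then i + k else i + k - M)) ^ 2
            - 2 * (L i * L (if i + k ≤ M then i + k else i + k - M)) := fun i _ => by ring
      rw [Finset.sum_congr rfl expand, Finset.sum_sub_distrib, Finset.sum_add_distrib,
        cyc_sum_left M (fun j => (L j) ^ 2) k hk'.1 hk'.2, ← Finset.mul_sum]
      rw [← hS2]; ring
    have hcross : ∑ k ∈ Icc 1 (M - 1), ∑ i ∈ Icc 1 M,
        L i * L (if i + k ≤ M then i + k else i + k - M) = S1 ^ 2 - S2 := by
      rw [Finset.sum_comm]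
      have inner : ∀ i ∈ Icc 1 M,
          ∑ k ∈ Icc 1 (M - 1), L i * L (if i + k ≤ M then i + k else i + k - M)
          = L i * (S1 - L i) := by
        intro i hi
        have hi' := mem_Icc.mp hi
        rw [← Finset.mul_sum]
        congr 1
        have h0 : Icc 0 (M - 1) = insert 0 (Icc 1 (M - 1)) := by
          ext x; simp [mem_Icc, mem_insert]; omega
        have := cyc_sum_right M L i hi'.1 hi'.2
        rw [h0, Finset.sum_insert (by simp)] at this
        have h00 : (if i + 0 ≤ M then i + 0 else i + 0 - M) = i := by
          simp [hi'.2]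
        rw [h00] at this
        rw [hS1]; linarith
      rw [Finset.sum_congr rfl inner]
      have : ∑ i ∈ Icc 1 M, L i * (S1 - L i) = S1 * S1 - S2 := by
        simp only [mul_sub, ← sq]
        rw [Finset.sum_sub_distrib, ← Finset.sum_mul, ← hS1, ← hS2]
        ring
      rw [this]; ring
    have hcard : ((M - 1 + 1 - 1 : ℕ) : ℝ) = (n : ℝ) - 2 := by
      have h : M - 1 + 1 - 1 = n - 2 := by omega
      rw [h, Nat.cast_sub (by omega : 2 ≤ n)]
      norm_num
    rw [Finset.sum_congr rfl step1, Finset.sum_sub_distrib, Finset.sum_const,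
      ← Finset.mul_sum, hcross, Nat.card_Icc, nsmul_eq_mul, hcard]
    ring
  rw [hLHS]
  -- RHS computation
  have hRi : ∀ i ∈ Icc 1 M,
      Real.log (‖(t : ℂ) - α i‖ / ‖α n - α i‖) = L i := by
    intro i hi
    have hi' := mem_Icc.mp hi
    rw [Real.log_div (habs_t i (by simp [mem_Icc]; omega)) (habs_a i hi)]
  rw [Finset.sum_congr rfl (fun i hi => by rw [hRi i hi])]
  set v : EuclideanSpace ℝ (Fin n) := ∑ i ∈ Icc 1 M, L i • c i with hv
  have hvj : ∀ j : Fin n, v j =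
      if (j : ℕ) + 1 = n then 0 else L ((j : ℕ) + 1) - S1 / ((n : ℝ) - 1) := by
    intro j
    have hvapp : v j = ∑ i ∈ Icc 1 M, L i * c i j := by
      rw [hv]
      rw [WithLp.ofLp_sum, Finset.sum_apply]
      exact Finset.sum_congr rfl fun i _ => by rw [PiLp.smul_apply]; rfl
    have hcij : ∀ i ∈ Icc 1 M, c i j =
        if (j : ℕ) + 1 = n then 0
        else if (j : ℕ) + 1 = i then ((n : ℝ) - 2) / ((n : ℝ) - 1)
        else -(1 / ((n : ℝ) - 1)) := by
      intro i hi
      have hi' := mem_Icc.mp hi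
      rw [hc i hi, PiLp.add_apply, PiLp.smul_apply,
        hb i (by simp [mem_Icc]; omega) j, hb n (by simp [mem_Icc]; omega) j]
      have hjn : (j : ℕ) + 1 ≤ n := by omega
      by_cases h1 : (j : ℕ) + 1 = n
      · have h2 : (j : ℕ) + 1 ≠ i := by omega
        rw [if_pos h1, if_neg h2, if_pos h1]
        simp only [smul_eq_mul]
        have hne : (n : ℝ) - 1 ≠ 0 := by linarith
        have hne2 : (n : ℝ) ≠ 0 := by linarith
        field_simp
        ring
      · rw [if_neg h1, if_neg h1]
        by_cases h2 : (j : ℕ) + 1 = i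
        · rw [if_pos h2, if_pos h2]
          simp only [smul_eq_mul]
          have hne : (n : ℝ) - 1 ≠ 0 := by linarith
          have hne2 : (n : ℝ) ≠ 0 := by linarith
          field_simp
          ring
        · rw [if_neg h2, if_neg h2]
          simp only [smul_eq_mul]
          have hne : (n : ℝ) - 1 ≠ 0 := by linarith
          have hne2 : (n : ℝ) ≠ 0 := by linarith
          field_simp
          ring
    rw [hvapp, Finset.sum_congr rfl fun i hi => by rw [hcij i hi]]
    by_cases h1 : (j : ℕ) + 1 = n
    · simp [h1]
    · rw [if_neg h1]
      have : ∀ i ∈ Icc 1 M, (L i * if (j : ℕ) + 1 = n then (0:ℝ)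
          else if (j : ℕ) + 1 = i then ((n : ℝ) - 2) / ((n : ℝ) - 1)
          else -(1 / ((n : ℝ) - 1)))
          = L i * (-(1 / ((n : ℝ) - 1)))
            + (if (j : ℕ) + 1 = i then L i * (((n : ℝ) - 2) / ((n : ℝ) - 1) + 1 / ((n : ℝ) - 1)) else 0) := by
        intro i hi
        rw [if_neg h1]
        by_cases h2 : (j : ℕ) + 1 = i <;> simp [h2] <;> ring
      rw [Finset.sum_congr rfl this, Finset.sum_add_distrib, ← Finset.sum_mul,
        Finset.sum_ite_eq (Icc 1 M) ((j : ℕ) + 1)]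
      have hjmem : (j : ℕ) + 1 ∈ Icc 1 M := by simp [mem_Icc]; omega
      rw [if_pos hjmem, ← hS1]
      have hne : (n : ℝ) - 1 ≠ 0 := by linarith
      field_simp
      ring
  have hnorm : ‖v‖ ^ 2 = ∑ i ∈ Icc 1 M, (L i - S1 / ((n : ℝ) - 1)) ^ 2 := by
    rw [EuclideanSpace.norm_eq, Real.sq_sqrt (by positivity)]
    have : ∀ j : Fin n, ‖v j‖ ^ 2 = (if (j : ℕ) + 1 = n then (0:ℝ)
        else (L ((j : ℕ) + 1) - S1 / ((n : ℝ) - 1)) ^ 2) := by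
      intro j
      rw [Real.norm_eq_abs, sq_abs, hvj j]
      by_cases h : (j : ℕ) + 1 = n <;> simp [h]
    rw [Finset.sum_congr rfl fun j _ => this j]
    have reindex : ∑ j : Fin n, (if (j : ℕ) + 1 = n then (0:ℝ)
        else (L ((j : ℕ) + 1) - S1 / ((n : ℝ) - 1)) ^ 2)
        = ∑ i ∈ Icc 1 n, (if i = n then (0:ℝ)
        else (L i - S1 / ((n : ℝ) - 1)) ^ 2) := by
      refine Finset.sum_nbij' (fun j : Fin n => (j : ℕ) + 1)
        (fun i => ⟨(i - 1) % n, Nat.mod_lt _ (by omega)⟩) ?_ ?_ ?_ ?_ ?_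
      · intro a _; simp only [mem_Icc]; omega
      · intro a _; exact mem_univ _
      · intro a _
        apply Fin.ext
        simp [Nat.mod_eq_of_lt a.isLt]
      · intro a ha
        simp only [mem_Icc] at ha
        simp only []
        rw [Nat.mod_eq_of_lt (by omega)]
        omega
      · intro a _; rfl
    rw [reindex]
    have hsplit : n = (n - 1) + 1 := by omega
    rw [hsplit, Finset.sum_Icc_succ_top (by omega), ← hsplit]
    rw [if_pos rfl, add_zero]
    exact Finset.sum_congr rfl fun i hi => by
      have hi' := mem_Icc.mp hi
      rw [if_neg (by omega)]
  rw [hnorm]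
  have hexp : ∑ i ∈ Icc 1 M, (L i - S1 / ((n : ℝ) - 1)) ^ 2
      = S2 - 2 * (S1 / ((n : ℝ) - 1)) * S1 + ((n : ℝ) - 1) * (S1 / ((n : ℝ) - 1)) ^ 2 := by
    have : ∀ i ∈ Icc 1 M, (L i - S1 / ((n : ℝ) - 1)) ^ 2
        = (L i) ^ 2 - 2 * (S1 / ((n : ℝ) - 1)) * L i + (S1 / ((n : ℝ) - 1)) ^ 2 :=
      fun i _ => by ring
    rw [Finset.sum_congr rfl this, Finset.sum_add_distrib, Finset.sum_sub_distrib,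
      ← Finset.mul_sum, Finset.sum_const, Nat.card_Icc, ← hS1, ← hS2]
    have hcard : ((M + 1 - 1 : ℕ) : ℝ) = (n : ℝ) - 1 := by
      have h : M + 1 - 1 = M := by omega
      rw [h, hMR]
    rw [nsmul_eq_mul, hcard]
  rw [hexp]
  have hne : (n : ℝ) - 1 ≠ 0 := by linarith
  field_simp
  ring
end

section
/- Let K be a number field and S a finite set of places of K containing all Archimedean places. Let F(x,y) = a_0 ∏(x - α_k y) ∈ ℤ[x,y] with α_1 generating K, and suppose that a_0 and F(x,y) are S-units in ℤ (i.e., all their prime factors lie below finite places of S). Then for any integers x, y, the element x - α_1 y is an S-unit of K, and Σ_{v ∈ S finite} |log |x - α_1 y|_v| ≤ log |a_0 · F(x,y)|. -/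
open Finset Polynomial NumberField

/-- The order of vanishing of `ρ` at a finite place `v` of a number field. -/
noncomputable def finOrd {K : Type*} [Field K] [NumberField K]
    (v : IsDedekindDomain.HeightOneSpectrum (RingOfIntegers K)) (ρ : K) : ℤ :=
  if h : v.valuation K ρ = 0 then 0 else -Multiplicative.toAdd (WithZero.unzero h)

open scoped Multiplicative

section Aux

variable {K : Type*} [Field K] [NumberField K]
  (v : IsDedekindDomain.HeightOneSpectrum (RingOfIntegers K))

lemma val_intCast (m : ℤ) : v.valuation K ((m : K)) ≤ 1 := by
  have h : ((m : K)) = algebraMap (RingOfIntegers K) K ((m : RingOfIntegers K)) := by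
    rw [map_intCast]
  rw [h]
  exact v.valuation_le_one _

lemma finOrd_spec {ρ : K} (hρ : ρ ≠ 0) :
    v.valuation K ρ = ((Multiplicative.ofAdd (-(finOrd v ρ)) : Multiplicative ℤ) : WithZero (Multiplicative ℤ)) := by
  have h : v.valuation K ρ ≠ 0 := (v.valuation K).ne_zero_iff.mpr hρ
  simp only [finOrd, dif_neg h]
  simp [WithZero.coe_unzero]

lemma finOrd_nonneg {ρ : K} (hρ : ρ ≠ 0) (h1 : v.valuation K ρ ≤ 1) : 0 ≤ finOrd v ρ := by
  rw [finOrd_spec v hρ] at h1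
  rw [show (1 : WithZero (Multiplicative ℤ)) = ((Multiplicative.ofAdd (0 : ℤ) : Multiplicative ℤ) : WithZero (Multiplicative ℤ)) by rfl] at h1
  rw [WithZero.coe_le_coe, Multiplicative.ofAdd_le] at h1
  omega

lemma finOrd_mul {ρ σ : K} (hρ : ρ ≠ 0) (hσ : σ ≠ 0) :
    finOrd v (ρ * σ) = finOrd v ρ + finOrd v σ := by
  have h := map_mul (v.valuation K) ρ σ
  rw [finOrd_spec v (mul_ne_zero hρ hσ), finOrd_spec v hρ, finOrd_spec v hσ,
    ← WithZero.coe_mul, WithZero.coe_inj, ← ofAdd_add] at h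
  have := Multiplicative.ofAdd.injective h
  omega

end Aux

section Aux2

variable {K : Type*} [Field K] [NumberField K]

/-- key factorization: `F(x,y) = (x - α₁ y) * γ` with `γ` having valuation `≤ 1` everywhere. -/
lemma main_aux (n : ℕ) (hn : 1 ≤ n) (f : Polynomial ℤ) (hdeg : f.natDegree = n)
    (α₁ : K) (hroot : Polynomial.aeval α₁ f = 0)
    (x y Fxy : ℤ)
    (hFxy : Fxy = ∑ k ∈ Finset.range (n + 1), f.coeff k * x ^ k * y ^ (n - k)) :
    ∃ γ : K, (Fxy : K) = ((x : K) - α₁ * (y : K)) * γ ∧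
      ∀ v : IsDedekindDomain.HeightOneSpectrum (RingOfIntegers K), v.valuation K γ ≤ 1 := by
  set fK : Polynomial K := f.map (algebraMap ℤ K) with hfK
  have hfr : IsRoot fK α₁ := by
    rw [IsRoot, eval_map, ← aeval_def, hroot]
  set q : Polynomial K := fK /ₘ (X - C α₁) with hqdef
  have hfq : (X - C α₁) * q = fK := mul_divByMonic_eq_iff_isRoot.2 hfr
  -- coefficient identities
  have hc : ∀ k, fK.coeff (k + 1) = q.coeff k - α₁ * q.coeff (k + 1) := by
    intro k
    rw [← hfq, sub_mul, coeff_sub, coeff_X_mul, coeff_C_mul]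
  have hc0 : fK.coeff 0 = -(α₁ * q.coeff 0) := by
    rw [← hfq, sub_mul, coeff_sub, coeff_C_mul]
    simp [coeff_mul_X_zero]
  -- degree facts
  have hinj : Function.Injective (algebraMap ℤ K) := fun a b h => by
    have : ((a : ℤ) : K) = ((b : ℤ) : K) := by simpa [algebraMap_int_eq] using h
    exact_mod_cast this
  have hfKdeg : fK.natDegree = n := by
    rw [hfK, natDegree_map_eq_of_injective hinj, hdeg]
  have hqz : ∀ j, n - 1 < j → q.coeff j = 0 := by
    intro j hj
    apply coeff_eq_zero_of_natDegree_lt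
    rw [hqdef, natDegree_divByMonic fK (monic_X_sub_C α₁), hfKdeg, natDegree_X_sub_C]
    exact hj
  -- the cofactor γ
  set γ : K := ∑ j ∈ Finset.range n, q.coeff j * (x : K) ^ j * (y : K) ^ (n - 1 - j) with hγdef
  refine ⟨γ, ?_, ?_⟩
  · -- identity
    have hr : ∀ k, fK.coeff k =
        (if k = 0 then (0 : K) else q.coeff (k - 1)) - α₁ * q.coeff k := by
      intro k
      cases k with
      | zero => simpa using hc0
      | succ j => simpa using hc j
    have hFK : (Fxy : K) = ∑ k ∈ Finset.range (n + 1),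
        fK.coeff k * (x : K) ^ k * (y : K) ^ (n - k) := by
      rw [hFxy]
      push_cast
      refine Finset.sum_congr rfl fun k _ => ?_
      rw [hfK, coeff_map, algebraMap_int_eq]
      simp only [eq_intCast]
    rw [hFK]
    have hsplit : ∑ k ∈ Finset.range (n + 1), fK.coeff k * (x : K) ^ k * (y : K) ^ (n - k)
        = (∑ k ∈ Finset.range (n + 1),
            (if k = 0 then (0 : K) else q.coeff (k - 1)) * (x : K) ^ k * (y : K) ^ (n - k))
          - (∑ k ∈ Finset.range (n + 1),
            α₁ * q.coeff k * (x : K) ^ k * (y : K) ^ (n - k)) := by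
      rw [← Finset.sum_sub_distrib]
      refine Finset.sum_congr rfl fun k _ => ?_
      rw [hr k]
      ring
    rw [hsplit]
    have hS1 : ∑ k ∈ Finset.range (n + 1),
        (if k = 0 then (0 : K) else q.coeff (k - 1)) * (x : K) ^ k * (y : K) ^ (n - k)
        = (x : K) * γ := by
      rw [Finset.sum_range_succ']
      have hg0 : (if (0:ℕ) = 0 then (0 : K) else q.coeff (0 - 1)) * (x : K) ^ 0 *
          (y : K) ^ (n - 0) = 0 := by simp
      rw [hg0, add_zero, hγdef, Finset.mul_sum]
      refine Finset.sum_congr rfl fun j hj => ?_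
      simp only [Nat.succ_ne_zero, if_false, Nat.add_sub_cancel]
      have h1 : n - (j + 1) = n - 1 - j := by omega
      rw [h1, pow_succ]
      ring
    have hS2 : ∑ k ∈ Finset.range (n + 1),
        α₁ * q.coeff k * (x : K) ^ k * (y : K) ^ (n - k) = α₁ * ((y : K) * γ) := by
      rw [Finset.sum_range_succ, hqz n (by omega)]
      rw [hγdef, Finset.mul_sum, Finset.mul_sum]
      simp only [mul_zero, zero_mul, add_zero]
      refine Finset.sum_congr rfl fun j hj => ?_
      rw [Finset.mem_range] at hj
      have h1 : n - j = (n - 1 - j) + 1 := by omega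
      rw [h1, pow_succ]
      ring
    rw [hS1, hS2]
    ring
  · -- valuation bound
    intro v
    have hfk : ∀ k, v.valuation K (fK.coeff k) ≤ 1 := by
      intro k
      rw [hfK, coeff_map, algebraMap_int_eq]
      exact val_intCast v _
    have hqv : ∀ j, v.valuation K (q.coeff j) ≤ 1 := by
      rcases le_or_gt (v.valuation K α₁) 1 with hα | hα
      · have H : ∀ i j, n ≤ j + i → v.valuation K (q.coeff j) ≤ 1 := by
          intro i
          induction i with
          | zero =>
            intro j hj
            rw [hqz j (by omega)]
            simp
          | succ i ih =>
            intro j hj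
            have hrec : q.coeff j = fK.coeff (j + 1) + α₁ * q.coeff (j + 1) := by
              rw [hc j]; ring
            rw [hrec]
            refine le_trans ((v.valuation K).map_add _ _) (max_le (hfk _) ?_)
            rw [map_mul]
            exact mul_le_one' hα (ih (j + 1) (by omega))
        exact fun j => H n j (by omega)
      · have hα0 : v.valuation K α₁ ≠ 0 := ne_of_gt (lt_trans zero_lt_one hα)
        have step : ∀ j, v.valuation K (α₁ * q.coeff j) ≤ 1 → v.valuation K (q.coeff j) ≤ 1 := by
          intro j h
          rw [map_mul] at h
          have h2 : v.valuation K (q.coeff j) ≤ (v.valuation K α₁)⁻¹ := by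
            have heq : v.valuation K (q.coeff j) =
                (v.valuation K α₁)⁻¹ * (v.valuation K α₁ * v.valuation K (q.coeff j)) := by
              rw [← mul_assoc, inv_mul_cancel₀ hα0, one_mul]
            rw [heq]
            calc (v.valuation K α₁)⁻¹ * (v.valuation K α₁ * v.valuation K (q.coeff j))
                ≤ (v.valuation K α₁)⁻¹ * 1 := mul_le_mul_right h _
              _ = (v.valuation K α₁)⁻¹ := mul_one _
          exact le_trans h2 (inv_le_one_of_one_le₀ (le_of_lt hα))
        intro j
        induction j with
        | zero =>
          apply step
          have h : α₁ * q.coeff 0 = -(fK.coeff 0) := by rw [hc0]; ring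
          rw [h, Valuation.map_neg]
          exact hfk 0
        | succ j ih =>
          apply step
          have h : α₁ * q.coeff (j + 1) = q.coeff j - fK.coeff (j + 1) := by
            rw [hc j]; ring
          rw [h]
          exact le_trans ((v.valuation K).map_sub _ _) (max_le ih (hfk _))
    rw [hγdef]
    refine (v.valuation K).map_sum_le fun j _ => ?_
    rw [map_mul, map_mul, map_pow, map_pow]
    exact mul_le_one' (mul_le_one' (hqv j) (pow_le_one' (val_intCast v x) _))
      (pow_le_one' (val_intCast v y) _)

end Aux2

/-- Let `K` be a number field and `S` a finite set of places of `K`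
containing all Archimedean places (represented here by a finite set of finite places;
the Archimedean condition is automatic).  Let `F(x,y)` be the binary form of degree `n`
with integer coefficients associated to an irreducible `f ∈ ℤ[X]` with leading
coefficient `a₀` and root `α₁` generating `K`.  If `a₀` and `F(x,y)` are `S`-units in `ℤ`
(all their prime factors lie below finite places of `S`), then `x - α₁ y` is an `S`-unit
of `K` and `Σ_{v ∈ S finite} |log |x - α₁ y|_v| ≤ log |a₀ F(x,y)|`, where
`|ρ|_v = N(𝔭_v)^(-ord_v(ρ)/d)` is the normalized absolute value at `v` and `d = [K:ℚ]`. -/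
theorem S_unit_bound {K : Type*} [Field K] [NumberField K] (n : ℕ) (hn : 1 ≤ n)
    (f : Polynomial ℤ) (hdeg : f.natDegree = n) (hirr : Irreducible f)
    (a0 : ℤ) (ha0 : a0 = f.leadingCoeff) (ha00 : a0 ≠ 0)
    (α₁ : K) (hroot : Polynomial.aeval α₁ f = 0)
    (hgen : (minpoly ℚ α₁).natDegree = n)
    (x y : ℤ) (Fxy : ℤ)
    (hFxy : Fxy = ∑ k ∈ Finset.range (n + 1), f.coeff k * x ^ k * y ^ (n - k))
    (hFxy0 : Fxy ≠ 0)
    (hβ : (x : K) - α₁ * (y : K) ≠ 0)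
    (S : Finset (IsDedekindDomain.HeightOneSpectrum (RingOfIntegers K)))
    (hSunit : ∀ v : IsDedekindDomain.HeightOneSpectrum (RingOfIntegers K), v ∉ S →
      (algebraMap ℤ (RingOfIntegers K)) (a0 * Fxy) ∉ v.asIdeal) :
    (∀ v : IsDedekindDomain.HeightOneSpectrum (RingOfIntegers K), v ∉ S →
        v.valuation K ((x : K) - α₁ * (y : K)) = 1) ∧
      ∑ v ∈ S, |(finOrd v ((x : K) - α₁ * (y : K)) : ℝ) *
          Real.log (Ideal.absNorm v.asIdeal)| / (Module.finrank ℚ K : ℝ) ≤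
        Real.log |((a0 * Fxy : ℤ) : ℝ)| := by
  obtain ⟨γ, hid, hγv⟩ := main_aux n hn f hdeg α₁ hroot x y Fxy hFxy
  set β : K := (x : K) - α₁ * (y : K) with hβdef
  -- a₀ α₁ is an algebraic integer
  have hαint : IsIntegral ℤ ((a0 : K) * α₁) := by
    have h : IsIntegral ℤ (f.leadingCoeff • α₁) := isIntegral_leadingCoeff_smul f α₁ hroot
    rwa [← ha0, zsmul_eq_mul] at h
  set R := RingOfIntegers K
  set t : R := IsIntegralClosure.mk' R _ hαint with ht
  have htv : algebraMap R K t = (a0 : K) * α₁ := IsIntegralClosure.algebraMap_mk' _ _ _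
  have haβ : ∀ v : IsDedekindDomain.HeightOneSpectrum R, v.valuation K ((a0 : K) * β) ≤ 1 := by
    intro v
    have heq : (a0 : K) * β = ((a0 * x : ℤ) : K) - ((a0 : K) * α₁) * (y : K) := by
      rw [hβdef]; push_cast; ring
    rw [heq]
    refine le_trans ((v.valuation K).map_sub _ _) (max_le (val_intCast v _) ?_)
    rw [map_mul, ← htv]
    exact mul_le_one' (v.valuation_le_one t) (val_intCast v y)
  have hFxyK : ((Fxy : ℤ) : K) ≠ 0 := Int.cast_ne_zero.mpr hFxy0
  have hγ0 : γ ≠ 0 := by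
    intro h; rw [h, mul_zero] at hid; exact hFxyK hid
  have ha0K : ((a0 : ℤ) : K) ≠ 0 := Int.cast_ne_zero.mpr ha00
  have hm0 : a0 * Fxy ≠ 0 := mul_ne_zero ha00 hFxy0
  have hmK : ((a0 * Fxy : ℤ) : K) ≠ 0 := Int.cast_ne_zero.mpr hm0
  have hcast : ∀ v : IsDedekindDomain.HeightOneSpectrum R,
      v.valuation K (algebraMap R K (algebraMap ℤ R (a0 * Fxy))) =
        v.valuation K (((a0 * Fxy : ℤ)) : K) := by
    intro v
    congr 1
  constructor
  · -- Part 1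
    intro v hv
    have hm1 : v.valuation K (((a0 * Fxy : ℤ)) : K) = 1 := by
      refine le_antisymm (val_intCast v _) ?_
      by_contra hlt
      rw [not_le] at hlt
      have hlt' : v.valuation K (algebraMap R K (algebraMap ℤ R (a0 * Fxy))) < 1 := by
        rw [hcast v]; exact hlt
      rw [v.valuation_lt_one_iff_dvd, Ideal.dvd_span_singleton] at hlt'
      exact hSunit v hv hlt'
    have hcast2 : (((a0 * Fxy : ℤ)) : K) = ((a0 : ℤ) : K) * ((Fxy : ℤ) : K) := by push_cast; ring
    rw [hcast2, map_mul] at hm1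
    have hva : v.valuation K ((a0 : ℤ) : K) = 1 := by
      refine le_antisymm (val_intCast v _) ?_
      calc (1 : WithZero (Multiplicative ℤ)) = v.valuation K ((a0 : ℤ) : K) * v.valuation K ((Fxy : ℤ) : K) := hm1.symm
        _ ≤ v.valuation K ((a0 : ℤ) : K) * 1 := mul_le_mul_right (val_intCast v _) _
        _ = v.valuation K ((a0 : ℤ) : K) := mul_one _
    have hvF : v.valuation K ((Fxy : ℤ) : K) = 1 := by
      rw [hva, one_mul] at hm1; exact hm1
    have hvid : v.valuation K ((Fxy : ℤ) : K) = v.valuation K β * v.valuation K γ := by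
      rw [hid]; exact map_mul _ _ _
    refine le_antisymm ?_ ?_
    · have h := haβ v
      rw [map_mul, hva, one_mul] at h
      exact h
    · calc (1 : WithZero (Multiplicative ℤ)) = v.valuation K β * v.valuation K γ := by rw [← hvid, hvF]
        _ ≤ v.valuation K β * 1 := mul_le_mul_right (hγv v) _
        _ = v.valuation K β := mul_one _
  · -- Part 2
    set m : ℤ := a0 * Fxy with hmdef
    set e : IsDedekindDomain.HeightOneSpectrum R → ℕ :=
      fun v => (finOrd v ((m : ℤ) : K)).toNat with hedef
    have hecast : ∀ v : IsDedekindDomain.HeightOneSpectrum R,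
        (e v : ℤ) = finOrd v ((m : ℤ) : K) := by
      intro v
      exact Int.toNat_of_nonneg (finOrd_nonneg v hmK (val_intCast v _))
    -- the key integer bound at each place
    have habs_le : ∀ v : IsDedekindDomain.HeightOneSpectrum R, |finOrd v β| ≤ (e v : ℤ) := by
      intro v
      rw [hecast v]
      have hsum : finOrd v ((m : ℤ) : K) =
          finOrd v ((a0 : ℤ) : K) + finOrd v ((Fxy : ℤ) : K) := by
        rw [show ((m : ℤ) : K) = ((a0 : ℤ) : K) * ((Fxy : ℤ) : K) from Int.cast_mul a0 Fxy]
        exact finOrd_mul v ha0K hFxyK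
      have h1 : 0 ≤ finOrd v ((a0 : ℤ) : K) + finOrd v β := by
        rw [← finOrd_mul v ha0K hβ]
        exact finOrd_nonneg v (mul_ne_zero ha0K hβ) (haβ v)
      have h2 : finOrd v ((Fxy : ℤ) : K) = finOrd v β + finOrd v γ := by
        rw [hid]; exact finOrd_mul v hβ hγ0
      have h3 : 0 ≤ finOrd v γ := finOrd_nonneg v hγ0 (hγv v)
      have h4 : 0 ≤ finOrd v ((a0 : ℤ) : K) := finOrd_nonneg v ha0K (val_intCast v _)
      have h5 : 0 ≤ finOrd v ((Fxy : ℤ) : K) := finOrd_nonneg v hFxyK (val_intCast v _)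
      rw [abs_le]
      omega
    -- divisibility of the ideal generated by m
    have hdvd : ∀ v ∈ S, v.asIdeal ^ (e v) ∣ Ideal.span {algebraMap ℤ R m} := by
      intro v _
      rw [← v.intValuation_le_pow_iff_dvd]
      have hval : v.intValuation (algebraMap ℤ R m) =
          ((Multiplicative.ofAdd (-(e v : ℤ)) : Multiplicative ℤ) : WithZero (Multiplicative ℤ)) := by
        have h1 : v.valuation K (algebraMap R K (algebraMap ℤ R m)) = v.intValuation (algebraMap ℤ R m) := by
          rw [IsDedekindDomain.HeightOneSpectrum.valuation_of_algebraMap]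
        rw [← h1, hcast v, finOrd_spec v hmK, hecast v]
      rw [hval]
      exact le_rfl
    have hM0 : algebraMap ℤ R m ≠ 0 := by
      rw [algebraMap_int_eq, eq_intCast]
      exact_mod_cast hm0
    -- product of prime powers divides
    have hprod : (∏ v ∈ S, v.asIdeal ^ (e v)) ∣ Ideal.span {algebraMap ℤ R m} := by
      refine Finset.prod_dvd_of_coprime ?_ hdvd
      intro v hv w hw hvw
      have hne : v.asIdeal ≠ w.asIdeal := by
        intro h
        exact hvw (IsDedekindDomain.HeightOneSpectrum.ext h)
      refine IsCoprime.pow ?_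
      rw [Ideal.isCoprime_iff_sup_eq]
      exact Ideal.IsMaximal.coprime_of_ne (IsDedekindDomain.HeightOneSpectrum.isMaximal v)
        (IsDedekindDomain.HeightOneSpectrum.isMaximal w) hne
    -- take norms
    set d : ℕ := Module.finrank ℚ K with hddef
    have hnormspan : Ideal.absNorm (Ideal.span {algebraMap ℤ R m}) = m.natAbs ^ d := by
      rw [Ideal.absNorm_span_singleton]
      have b := Module.Free.chooseBasis ℤ R
      rw [Algebra.norm_algebraMap_of_basis b, Int.natAbs_pow]
      congr 1
      rw [← Module.finrank_eq_card_chooseBasisIndex]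
      exact RingOfIntegers.rank K
    have hnat : (∏ v ∈ S, Ideal.absNorm v.asIdeal ^ (e v)) ∣ m.natAbs ^ d := by
      have h := map_dvd Ideal.absNorm hprod
      rw [map_prod, hnormspan] at h
      simpa only [map_pow] using h
    -- pass to real logarithms
    have hd0 : 0 < d := Module.finrank_pos
    have hNpos : ∀ v : IsDedekindDomain.HeightOneSpectrum R, 0 < Ideal.absNorm v.asIdeal := by
      intro v
      refine Nat.pos_of_ne_zero ?_
      rw [Ne, Ideal.absNorm_eq_zero_iff]
      exact v.ne_bot
    have hNlog : ∀ v : IsDedekindDomain.HeightOneSpectrum R,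
        0 ≤ Real.log (Ideal.absNorm v.asIdeal) := by
      intro v
      refine Real.log_nonneg ?_
      exact_mod_cast hNpos v
    have hterm : ∀ v ∈ S, |(finOrd v β : ℝ) * Real.log (Ideal.absNorm v.asIdeal)|
        ≤ (e v : ℝ) * Real.log (Ideal.absNorm v.asIdeal) := by
      intro v _
      rw [abs_mul, abs_of_nonneg (hNlog v)]
      refine mul_le_mul_of_nonneg_right ?_ (hNlog v)
      calc |(finOrd v β : ℝ)| = ((|finOrd v β| : ℤ) : ℝ) := by rw [Int.cast_abs]
        _ ≤ ((e v : ℤ) : ℝ) := by exact_mod_cast habs_le v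
        _ = (e v : ℝ) := by push_cast; rfl
    have hprodpos : (0 : ℝ) < ((∏ v ∈ S, Ideal.absNorm v.asIdeal ^ (e v) : ℕ) : ℝ) := by
      have : 0 < ∏ v ∈ S, Ideal.absNorm v.asIdeal ^ (e v) :=
        Finset.prod_pos fun v _ => pow_pos (hNpos v) _
      exact_mod_cast this
    have hchain : ∑ v ∈ S, (e v : ℝ) * Real.log (Ideal.absNorm v.asIdeal)
        ≤ (d : ℝ) * Real.log |((m : ℤ) : ℝ)| := by
      have hlogeq : ∑ v ∈ S, (e v : ℝ) * Real.log (Ideal.absNorm v.asIdeal)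
          = Real.log ((∏ v ∈ S, Ideal.absNorm v.asIdeal ^ (e v) : ℕ) : ℝ) := by
        rw [Nat.cast_prod, Real.log_prod]
        · refine Finset.sum_congr rfl fun v _ => ?_
          rw [Nat.cast_pow, Real.log_pow]
        · intro v _
          exact_mod_cast (pow_pos (hNpos v) (e v)).ne'
      have hle2 : ((∏ v ∈ S, Ideal.absNorm v.asIdeal ^ (e v) : ℕ) : ℝ)
          ≤ ((m.natAbs ^ d : ℕ) : ℝ) := by
        exact_mod_cast Nat.le_of_dvd (pow_pos (Int.natAbs_pos.mpr hm0) d) hnat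
      have hlog2 := Real.log_le_log hprodpos hle2
      rw [hlogeq]
      refine le_trans hlog2 ?_
      rw [Nat.cast_pow, Real.log_pow, Nat.cast_natAbs, Int.cast_abs]
    rw [← Finset.sum_div, div_le_iff₀ (by exact_mod_cast hd0 : (0:ℝ) < (d : ℝ))]
    calc ∑ v ∈ S, |(finOrd v β : ℝ) * Real.log (Ideal.absNorm v.asIdeal)|
        ≤ ∑ v ∈ S, (e v : ℝ) * Real.log (Ideal.absNorm v.asIdeal) := Finset.sum_le_sum hterm
      _ ≤ (d : ℝ) * Real.log |((m : ℤ) : ℝ)| := hchain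
      _ = Real.log |((m : ℤ) : ℝ)| * (d : ℝ) := mul_comm _ _
end
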